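/- arXiv:2309.08749 — 3 statements merged into one kernel-verified Lean document; each statement's English description precedes it below -/
import Mathlib

section
/- Let n ≥ 2 and a, b ∈ ℕ. The complex vector space of polynomials P ∈ ℂ[z_1,…,z_n,w_1,…,w_n] that are bi-homogeneous of degree (a,b) — meaning every monomial of P has total degree a in the variables z_1,…,z_n and total degree b in the variables w_1,…,w_n — and harmonic, i.e. Σ_{j=1}^n ∂²P/∂z_j∂w_j = 0, has (finite) dimension ((n + a + b − 1)/(n − 1)) · C(a + n − 2, n − 2) · C(b + n − 2, n − 2). -/
open Complex Finset Matrix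

noncomputable section

/-- A point of `ℝ^n × ℝ^n × ℝ^n`, with coordinates `(x, y, q)`. -/
abbrev Vec (n : ℕ) := (Fin n → ℝ) × (Fin n → ℝ) × (Fin n → ℝ)

/-- Partial derivative in the variable `x_j`. -/
noncomputable def pdx (n : ℕ) (j : Fin n) (f : Vec n → ℂ) : Vec n → ℂ :=
  fun p => deriv (fun t => f (Function.update p.1 j t, p.2.1, p.2.2)) (p.1 j)

/-- Partial derivative in the variable `y_j`. -/
noncomputable def pdy (n : ℕ) (j : Fin n) (f : Vec n → ℂ) : Vec n → ℂ :=
  fun p => deriv (fun t => f (p.1, Function.update p.2.1 j t, p.2.2)) (p.2.1 j)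

/-- Partial derivative in the variable `q_j`. -/
noncomputable def pdq (n : ℕ) (j : Fin n) (f : Vec n → ℂ) : Vec n → ℂ :=
  fun p => deriv (fun t => f (p.1, p.2.1, Function.update p.2.2 j t)) (p.2.2 j)

/-- The symplectic Dirac operator `D_s f = Σ_j (i q_j ∂f/∂y_j − ∂²f/∂q_j∂x_j)`. -/
noncomputable def Ds (n : ℕ) (f : Vec n → ℂ) : Vec n → ℂ :=
  fun p => ∑ j : Fin n, (Complex.I * (p.2.2 j : ℂ) * pdy n j f p - pdq n j (pdx n j f) p)

/-- The twisted symplectic Dirac operator `D_t f = Σ_j (i q_j ∂f/∂x_j + ∂²f/∂y_j∂q_j)`. -/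
noncomputable def Dt (n : ℕ) (f : Vec n → ℂ) : Vec n → ℂ :=
  fun p => ∑ j : Fin n, (Complex.I * (p.2.2 j : ℂ) * pdx n j f p + pdy n j (pdq n j f) p)

/-- The Fischer dual `X_s f = Σ_j (y_j ∂f/∂q_j + i q_j x_j f)`. -/
noncomputable def Xs (n : ℕ) (f : Vec n → ℂ) : Vec n → ℂ :=
  fun p => ∑ j : Fin n, ((p.2.1 j : ℂ) * pdq n j f p + Complex.I * (p.2.2 j : ℂ) * (p.1 j : ℂ) * f p)

/-- The Fischer dual `X_t f = Σ_j (x_j ∂f/∂q_j − i y_j q_j f)`. -/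
noncomputable def Xt (n : ℕ) (f : Vec n → ℂ) : Vec n → ℂ :=
  fun p => ∑ j : Fin n, ((p.1 j : ℂ) * pdq n j f p - Complex.I * (p.2.1 j : ℂ) * (p.2.2 j : ℂ) * f p)

/-- The Euler operator `𝔼 f = Σ_j (x_j ∂f/∂x_j + y_j ∂f/∂y_j)`. -/
noncomputable def EulerOp (n : ℕ) (f : Vec n → ℂ) : Vec n → ℂ :=
  fun p => ∑ j : Fin n, ((p.1 j : ℂ) * pdx n j f p + (p.2.1 j : ℂ) * pdy n j f p)

/-- The Laplacian in the `(x,y)` variables. -/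
noncomputable def Lap (n : ℕ) (f : Vec n → ℂ) : Vec n → ℂ :=
  fun p => ∑ j : Fin n, (pdx n j (pdx n j f) p + pdy n j (pdy n j f) p)
open MvPolynomial in
/-- The operator `Σ_j ∂²/∂z_j∂w_j`, where the `z`-variables are indexed by `Sum.inl`
and the `w`-variables (playing the role of the conjugates `z̄_j`) by `Sum.inr`. -/
noncomputable def harmOp (n : ℕ) :
    MvPolynomial (Fin n ⊕ Fin n) ℂ →ₗ[ℂ] MvPolynomial (Fin n ⊕ Fin n) ℂ :=
  ∑ j : Fin n,
    ((pderiv (R := ℂ) (σ := Fin n ⊕ Fin n) (Sum.inl j)).toLinearMap ∘ₗ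
      (pderiv (R := ℂ) (σ := Fin n ⊕ Fin n) (Sum.inr j)).toLinearMap)

open MvPolynomial in
/-- The space of polynomials that are bi-homogeneous of bi-degree `(a, b)` (degree `a`
in the `z`-variables and degree `b` in the `w`-variables) and harmonic. -/
noncomputable def biHarmonics (n a b : ℕ) : Submodule ℂ (MvPolynomial (Fin n ⊕ Fin n) ℂ) :=
  weightedHomogeneousSubmodule ℂ (Sum.elim (fun _ => 1) (fun _ => 0)) a ⊓
    weightedHomogeneousSubmodule ℂ (Sum.elim (fun _ => 0) (fun _ => 1)) b ⊓
    LinearMap.ker (harmOp n)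


namespace BiHarmAux
open MvPolynomial Finsupp

variable (n : ℕ)

abbrev w1 : (Fin n ⊕ Fin n) → ℕ := Sum.elim (fun _ => 1) (fun _ => 0)
abbrev w2 : (Fin n ⊕ Fin n) → ℕ := Sum.elim (fun _ => 0) (fun _ => 1)

lemma weight_w1 (d : (Fin n ⊕ Fin n) →₀ ℕ) :
    weight (w1 n) d = ∑ j : Fin n, d (Sum.inl j) := by
  rw [Finsupp.weight_apply, Finsupp.sum_fintype _ _ (fun i => by simp)]
  simp [Fintype.sum_sum_type]

lemma weight_w2 (d : (Fin n ⊕ Fin n) →₀ ℕ) :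
    weight (w2 n) d = ∑ j : Fin n, d (Sum.inr j) := by
  rw [Finsupp.weight_apply, Finsupp.sum_fintype _ _ (fun i => by simp)]
  simp [Fintype.sum_sum_type]

def Pab (a b : ℕ) : Submodule ℂ (MvPolynomial (Fin n ⊕ Fin n) ℂ) :=
  weightedHomogeneousSubmodule ℂ (w1 n) a ⊓ weightedHomogeneousSubmodule ℂ (w2 n) b

def Sset (a b : ℕ) : Set ((Fin n ⊕ Fin n) →₀ ℕ) :=
  {d | weight (w1 n) d = a ∧ weight (w2 n) d = b}

lemma Pab_eq (a b : ℕ) : Pab n a b = restrictSupport ℂ (Sset n a b) := by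
  ext p
  simp only [Pab, Submodule.mem_inf, mem_weightedHomogeneousSubmodule,
    restrictSupport, Finsupp.mem_supported, IsWeightedHomogeneous]
  constructor
  · rintro ⟨h1, h2⟩ d hd
    have hd' : coeff d p ≠ 0 := by
      exact MvPolynomial.mem_support_iff.mp hd
    exact ⟨h1 hd', h2 hd'⟩
  · intro h
    constructor
    · intro d hd
      exact (h (MvPolynomial.mem_support_iff.mpr hd)).1
    · intro d hd
      exact (h (MvPolynomial.mem_support_iff.mpr hd)).2

def countEquiv (a b : ℕ) : (Sset n a b) ≃ (Sym (Fin n) a × Sym (Fin n) b) := by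
  refine (Equiv.subtypeEquiv Finsupp.sumFinsuppEquivProdFinsupp
      (q := fun z => (Multiset.card (Finsupp.toMultiset z.1) = a ∧
        Multiset.card (Finsupp.toMultiset z.2) = b)) (fun d => ?_)).trans
    ((Equiv.subtypeProdEquivProd
        (p := fun f => Multiset.card (Finsupp.toMultiset f) = a)
        (q := fun f => Multiset.card (Finsupp.toMultiset f) = b)).trans
      (Equiv.prodCongr
        ((Equiv.subtypeEquiv (p := fun f => Multiset.card (Finsupp.toMultiset f) = a)
          (q := fun s => Multiset.card s = a)
          (Multiset.toFinsupp (α := Fin n)).toEquiv.symm (fun f => ?_)).trans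
          (Equiv.setCongr rfl))
        ((Equiv.subtypeEquiv (p := fun f => Multiset.card (Finsupp.toMultiset f) = b)
          (q := fun s => Multiset.card s = b)
          (Multiset.toFinsupp (α := Fin n)).toEquiv.symm (fun f => ?_)).trans
          (Equiv.setCongr rfl))))
  · show (weight (w1 n) d = a ∧ weight (w2 n) d = b) ↔
      (Multiset.card (Finsupp.toMultiset (sumFinsuppEquivProdFinsupp d).1) = a ∧
        Multiset.card (Finsupp.toMultiset (sumFinsuppEquivProdFinsupp d).2) = b)
    rw [weight_w1, weight_w2, Finsupp.card_toMultiset, Finsupp.card_toMultiset,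
      Finsupp.sum_fintype _ _ (fun i => rfl), Finsupp.sum_fintype _ _ (fun i => rfl)]
    simp [Finsupp.fst_sumFinsuppEquivProdFinsupp, Finsupp.snd_sumFinsuppEquivProdFinsupp]
  · rfl
  · rfl

instance (a b : ℕ) : Fintype (Sset n a b) := Fintype.ofEquiv _ (countEquiv n a b).symm

lemma card_Sset (a b : ℕ) :
    Fintype.card (Sset n a b) = (n + a - 1).choose a * (n + b - 1).choose b := by
  rw [Fintype.card_congr (countEquiv n a b), Fintype.card_prod,
    Sym.card_sym_eq_choose, Sym.card_sym_eq_choose, Fintype.card_fin]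

lemma finrank_Pab (a b : ℕ) :
    Module.finrank ℂ (Pab n a b) = (n + a - 1).choose a * (n + b - 1).choose b := by
  rw [Pab_eq, Module.finrank_eq_card_basis (MvPolynomial.basisRestrictSupport ℂ (Sset n a b)),
    card_Sset]


lemma sub_single_add {σ : Type*} [DecidableEq σ] (d : σ →₀ ℕ) (i : σ) (h : d i ≠ 0) :
    d - Finsupp.single i 1 + Finsupp.single i 1 = d := by
  ext a
  by_cases ha : a = i
  · subst ha
    simp only [Finsupp.coe_add, Finsupp.coe_tsub, Pi.add_apply, Pi.sub_apply,
      Finsupp.single_eq_same]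
    omega
  · simp [Finsupp.single_apply, Ne.symm ha, ha]

lemma weight_fintype {σ : Type*} [Fintype σ] (w : σ → ℕ) (d : σ →₀ ℕ) :
    weight w d = ∑ i : σ, d i * w i := by
  rw [Finsupp.weight_apply, Finsupp.sum_fintype _ _ (fun i => by simp)]
  simp [smul_eq_mul]

lemma X_mul_pderiv_monomial {σ : Type*} [DecidableEq σ] (i : σ) (d : σ →₀ ℕ) (c : ℂ) :
    X i * pderiv i (monomial d c) = d i • monomial d c := by
  rw [pderiv_monomial]
  by_cases h : d i = 0
  · simp [h]
  · rw [X, monomial_mul, one_mul]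
    rw [show Finsupp.single i 1 + (d - Finsupp.single i 1) = d by
      rw [add_comm]; exact sub_single_add d i h]
    rw [smul_monomial]
    congr 1
    rw [mul_comm]
    simp [nsmul_eq_mul]

lemma euler {σ : Type*} [Fintype σ] [DecidableEq σ] (w : σ → ℕ) (m : ℕ)
    (p : MvPolynomial σ ℂ) (hp : IsWeightedHomogeneous w p m) :
    ∑ i : σ, w i • (X i * pderiv i p) = m • p := by
  calc ∑ i : σ, w i • (X i * pderiv i p)
      = ∑ i : σ, ∑ d ∈ p.support, (w i * d i) • monomial d (coeff d p) := by
        refine Finset.sum_congr rfl fun i _ => ?_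
        conv_lhs => rw [← support_sum_monomial_coeff p]
        rw [map_sum, Finset.mul_sum, Finset.smul_sum]
        refine Finset.sum_congr rfl fun d _ => ?_
        rw [X_mul_pderiv_monomial, smul_smul]
    _ = ∑ d ∈ p.support, (∑ i : σ, w i * d i) • monomial d (coeff d p) := by
        rw [Finset.sum_comm]
        exact Finset.sum_congr rfl fun d _ => by rw [Finset.sum_smul]
    _ = ∑ d ∈ p.support, m • monomial d (coeff d p) := by
        refine Finset.sum_congr rfl fun d hd => ?_
        have : ∑ i : σ, w i * d i = weight w d := by
          rw [weight_fintype]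
          exact Finset.sum_congr rfl fun i _ => mul_comm _ _
        rw [this, hp (MvPolynomial.mem_support_iff.mp hd)]
    _ = m • p := by rw [← Finset.smul_sum, support_sum_monomial_coeff]

lemma isWH_pderiv {σ : Type*} [DecidableEq σ] (w : σ → ℕ) {m m' : ℕ}
    {p : MvPolynomial σ ℂ} (hp : IsWeightedHomogeneous w p m) (i : σ)
    (hm : m = m' + w i) : IsWeightedHomogeneous w (pderiv i p) m' := by
  rw [← mem_weightedHomogeneousSubmodule]
  have hps : pderiv i p = ∑ d ∈ p.support, pderiv i (monomial d (coeff d p)) := by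
    conv_lhs => rw [← support_sum_monomial_coeff p]
    rw [map_sum]
  rw [hps]
  refine Submodule.sum_mem _ fun d hd => ?_
  rw [mem_weightedHomogeneousSubmodule, pderiv_monomial]
  by_cases h : d i = 0
  · rw [h]
    simpa using isWeightedHomogeneous_zero ℂ w m'
  · refine isWeightedHomogeneous_monomial w _ _ ?_
    have hd' : weight w d = m := hp (MvPolynomial.mem_support_iff.mp hd)
    have : weight w (d - Finsupp.single i 1) + weight w (Finsupp.single i 1) = m := by
      rw [← map_add, sub_single_add d i h, hd']
    have hsingle : weight w (Finsupp.single i 1) = w i := by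
      rw [Finsupp.weight_apply, Finsupp.sum_single_index (by simp), one_smul]
    omega


lemma harmOp_apply {n : ℕ} (p : MvPolynomial (Fin n ⊕ Fin n) ℂ) :
    harmOp n p = ∑ j : Fin n, pderiv (Sum.inl j) (pderiv (Sum.inr j) p) := by
  simp [harmOp]

lemma pderiv_vanish_w1 {n : ℕ} {p : MvPolynomial (Fin n ⊕ Fin n) ℂ}
    (hp : IsWeightedHomogeneous (w1 n) p 0) (j : Fin n) : pderiv (Sum.inl j) p = 0 := by
  have hps : pderiv (Sum.inl j) p
      = ∑ d ∈ p.support, pderiv (Sum.inl j) (monomial d (coeff d p)) := by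
    conv_lhs => rw [← support_sum_monomial_coeff p]
    rw [map_sum]
  rw [hps]
  refine Finset.sum_eq_zero fun d hd => ?_
  have h0 : weight (w1 n) d = 0 := hp (MvPolynomial.mem_support_iff.mp hd)
  rw [weight_w1] at h0
  have hdj : d (Sum.inl j) = 0 :=
    Finset.sum_eq_zero_iff.mp h0 j (Finset.mem_univ j)
  rw [pderiv_monomial, hdj]; simp

lemma pderiv_vanish_w2 {n : ℕ} {p : MvPolynomial (Fin n ⊕ Fin n) ℂ}
    (hp : IsWeightedHomogeneous (w2 n) p 0) (j : Fin n) : pderiv (Sum.inr j) p = 0 := by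
  have hps : pderiv (Sum.inr j) p
      = ∑ d ∈ p.support, pderiv (Sum.inr j) (monomial d (coeff d p)) := by
    conv_lhs => rw [← support_sum_monomial_coeff p]
    rw [map_sum]
  rw [hps]
  refine Finset.sum_eq_zero fun d hd => ?_
  have h0 : weight (w2 n) d = 0 := hp (MvPolynomial.mem_support_iff.mp hd)
  rw [weight_w2] at h0
  have hdj : d (Sum.inr j) = 0 :=
    Finset.sum_eq_zero_iff.mp h0 j (Finset.mem_univ j)
  rw [pderiv_monomial, hdj]; simp

lemma harm_zero_left {n : ℕ} {p : MvPolynomial (Fin n ⊕ Fin n) ℂ}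
    (hp : IsWeightedHomogeneous (w1 n) p 0) : harmOp n p = 0 := by
  rw [harmOp_apply]
  refine Finset.sum_eq_zero fun j _ => ?_
  have h1 : IsWeightedHomogeneous (w1 n) (pderiv (Sum.inr j) p) 0 :=
    isWH_pderiv (w1 n) hp (Sum.inr j) (by simp)
  exact pderiv_vanish_w1 h1 j

lemma harm_zero_right {n : ℕ} {p : MvPolynomial (Fin n ⊕ Fin n) ℂ}
    (hp : IsWeightedHomogeneous (w2 n) p 0) : harmOp n p = 0 := by
  rw [harmOp_apply]
  refine Finset.sum_eq_zero fun j _ => ?_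
  rw [pderiv_vanish_w2 hp j, map_zero]

def sPoly (n : ℕ) : MvPolynomial (Fin n ⊕ Fin n) ℂ :=
  ∑ j : Fin n, X (Sum.inl j) * X (Sum.inr j)

lemma sPoly_isWH1 (n : ℕ) : IsWeightedHomogeneous (w1 n) (sPoly n) 1 :=
  IsWeightedHomogeneous.sum Finset.univ _ 1 (fun j _ => by
    simpa using (isWeightedHomogeneous_X ℂ (w1 n) (Sum.inl j)).mul
      (isWeightedHomogeneous_X ℂ (w1 n) (Sum.inr j)))

lemma sPoly_isWH2 (n : ℕ) : IsWeightedHomogeneous (w2 n) (sPoly n) 1 :=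
  IsWeightedHomogeneous.sum Finset.univ _ 1 (fun j _ => by
    simpa using (isWeightedHomogeneous_X ℂ (w2 n) (Sum.inl j)).mul
      (isWeightedHomogeneous_X ℂ (w2 n) (Sum.inr j)))

lemma pderiv_inl_sPoly {n : ℕ} (k : Fin n) :
    pderiv (Sum.inl k) (sPoly n) = X (Sum.inr k) := by
  rw [sPoly, map_sum, Finset.sum_eq_single k]
  · simp [pderiv_mul]
  · intro j _ hj
    rw [pderiv_mul, pderiv_X_of_ne (by simp [hj]), pderiv_X_of_ne (by simp)]
    ring
  · simp

lemma pderiv_inr_sPoly {n : ℕ} (k : Fin n) :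
    pderiv (Sum.inr k) (sPoly n) = X (Sum.inl k) := by
  rw [sPoly, map_sum, Finset.sum_eq_single k]
  · simp [pderiv_mul]
  · intro j _ hj
    rw [pderiv_mul, pderiv_X_of_ne (by simp), pderiv_X_of_ne (by simp [hj])]
    ring
  · simp

lemma key_identity {n : ℕ} (p : MvPolynomial (Fin n ⊕ Fin n) ℂ) :
    harmOp n (sPoly n * p) = sPoly n * harmOp n p + n • p
      + (∑ j : Fin n, X (Sum.inl j) * pderiv (Sum.inl j) p)
      + (∑ j : Fin n, X (Sum.inr j) * pderiv (Sum.inr j) p) := by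
  rw [harmOp_apply, harmOp_apply]
  have step : ∀ j : Fin n, pderiv (Sum.inl j) (pderiv (Sum.inr j) (sPoly n * p))
      = p + X (Sum.inl j) * pderiv (Sum.inl j) p + X (Sum.inr j) * pderiv (Sum.inr j) p
        + sPoly n * pderiv (Sum.inl j) (pderiv (Sum.inr j) p) := by
    intro j
    rw [pderiv_mul, pderiv_inr_sPoly, map_add, pderiv_mul, pderiv_mul, pderiv_X_self,
      pderiv_inl_sPoly]
    ring
  rw [Finset.sum_congr rfl (fun j _ => step j), Finset.sum_add_distrib, Finset.sum_add_distrib,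
    Finset.sum_add_distrib, Finset.sum_const, Finset.card_univ, Fintype.card_fin,
    ← Finset.mul_sum]
  abel

lemma key_identity' {n a b : ℕ} {p : MvPolynomial (Fin n ⊕ Fin n) ℂ} (hp : p ∈ Pab n a b) :
    harmOp n (sPoly n * p) = sPoly n * harmOp n p + (n + a + b) • p := by
  rw [key_identity]
  have e1 : ∑ j : Fin n, X (Sum.inl j) * pderiv (Sum.inl j) p = a • p := by
    have h := euler (w1 n) a p hp.1
    rw [Fintype.sum_sum_type] at h
    simpa using h
  have e2 : ∑ j : Fin n, X (Sum.inr j) * pderiv (Sum.inr j) p = b • p := by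
    have h := euler (w2 n) b p hp.2
    rw [Fintype.sum_sum_type] at h
    simpa using h
  rw [e1, e2, show (n + a + b) • p = n • p + a • p + b • p by rw [add_smul, add_smul]]
  abel

lemma harm_mem {n a b : ℕ} {p : MvPolynomial (Fin n ⊕ Fin n) ℂ}
    (hp : p ∈ Pab n (a + 1) (b + 1)) : harmOp n p ∈ Pab n a b := by
  rw [harmOp_apply]
  refine Submodule.sum_mem _ fun j _ => ?_
  have h1 : IsWeightedHomogeneous (w1 n) (pderiv (Sum.inr j) p) (a + 1) :=
    isWH_pderiv (m' := a + 1) _ hp.1 (Sum.inr j) (by simp)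
  have h2 : IsWeightedHomogeneous (w2 n) (pderiv (Sum.inr j) p) b :=
    isWH_pderiv (m' := b) _ hp.2 (Sum.inr j) (by simp)
  exact ⟨isWH_pderiv (m' := a) _ h1 (Sum.inl j) (by simp),
    isWH_pderiv (m' := b) _ h2 (Sum.inl j) (by simp)⟩

lemma sPoly_mul_mem {n a b : ℕ} {q : MvPolynomial (Fin n ⊕ Fin n) ℂ}
    (hq : q ∈ Pab n a b) : sPoly n * q ∈ Pab n (a + 1) (b + 1) := by
  constructor
  · have := (sPoly_isWH1 n).mul hq.1
    rwa [add_comm] at this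
  · have := (sPoly_isWH2 n).mul hq.2
    rwa [add_comm] at this

lemma nsmul_eq_zero {V : Type*} [AddCommGroup V] [Module ℂ V] {k : ℕ} (hk : k ≠ 0)
    {v : V} (h : k • v = 0) : v = 0 := by
  rw [← Nat.cast_smul_eq_nsmul ℂ] at h
  rcases smul_eq_zero.mp h with h' | h'
  · exact absurd (Nat.cast_injective (h'.trans Nat.cast_zero.symm)) hk
  · exact h'

lemma inj_aux {n : ℕ} (hn : 1 ≤ n) :
    ∀ a b t : ℕ, ∀ q ∈ Pab n a b,
      (t + n + a + b) • q + sPoly n * harmOp n q = 0 → q = 0 := by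
  intro a
  induction a with
  | zero =>
    intro b t q hq heq
    rw [harm_zero_left hq.1, mul_zero, add_zero] at heq
    exact nsmul_eq_zero (by omega) heq
  | succ a ih =>
    intro b t q hq heq
    cases b with
    | zero =>
      rw [harm_zero_right hq.2, mul_zero, add_zero] at heq
      exact nsmul_eq_zero (by omega) heq
    | succ b =>
      have hmem : harmOp n q ∈ Pab n a b := harm_mem hq
      have h2 := congrArg (harmOp n) heq
      rw [map_add, map_nsmul, map_zero, key_identity' hmem] at h2
      have h3 : ((t + n + a + b + 2) + n + a + b) • harmOp n q
          + sPoly n * harmOp n (harmOp n q) = 0 := by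
        simp only [← Nat.cast_smul_eq_nsmul ℂ] at h2 ⊢
        push_cast at h2 ⊢
        linear_combination (norm := module) h2
      have hz : harmOp n q = 0 := ih b (t + n + a + b + 2) (harmOp n q) hmem h3
      rw [hz, mul_zero, add_zero] at heq
      exact nsmul_eq_zero (by omega) heq

instance PabFinite (n a b : ℕ) : FiniteDimensional ℂ (Pab n a b) := by
  rw [Pab_eq]
  exact Module.Finite.of_basis (basisRestrictSupport ℂ (Sset n a b))

lemma surj {n : ℕ} (hn : 1 ≤ n) (a b : ℕ) (p : MvPolynomial (Fin n ⊕ Fin n) ℂ)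
    (hp : p ∈ Pab n a b) : ∃ q ∈ Pab n (a + 1) (b + 1), harmOp n q = p := by
  let F : Pab n a b →ₗ[ℂ] Pab n a b :=
    { toFun := fun x => ⟨harmOp n (sPoly n * (x : MvPolynomial (Fin n ⊕ Fin n) ℂ)),
        harm_mem (sPoly_mul_mem x.2)⟩
      map_add' := fun x y => by
        ext
        simp [mul_add]
      map_smul' := fun c x => by
        ext
        simp [Algebra.mul_smul_comm] }
  have hFinj : Function.Injective F := by
    rw [← LinearMap.ker_eq_bot, LinearMap.ker_eq_bot']
    intro x hx
    have hx' : harmOp n (sPoly n * (x : MvPolynomial (Fin n ⊕ Fin n) ℂ)) = 0 :=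
      congrArg Subtype.val hx
    rw [key_identity' x.2] at hx'
    have : (0 + n + a + b) • (x : MvPolynomial (Fin n ⊕ Fin n) ℂ)
        + sPoly n * harmOp n (x : MvPolynomial (Fin n ⊕ Fin n) ℂ) = 0 := by
      rw [zero_add, add_comm]
      exact hx'
    have := inj_aux hn a b 0 (x : MvPolynomial (Fin n ⊕ Fin n) ℂ) x.2 this
    exact Subtype.ext this
  have hFsurj : Function.Surjective F := (LinearMap.injective_iff_surjective).mp hFinj
  obtain ⟨x, hx⟩ := hFsurj ⟨p, hp⟩
  exact ⟨sPoly n * (x : MvPolynomial (Fin n ⊕ Fin n) ℂ), sPoly_mul_mem x.2,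
    congrArg Subtype.val hx⟩

lemma biHarmonics_eq (n a b : ℕ) :
    biHarmonics n a b = Pab n a b ⊓ LinearMap.ker (harmOp n) := rfl

lemma biH_le (n a b : ℕ) : biHarmonics n a b ≤ Pab n a b := by
  rw [biHarmonics_eq]
  exact inf_le_left

lemma biHarmonics_left_zero (n b : ℕ) : biHarmonics n 0 b = Pab n 0 b := by
  rw [biHarmonics_eq]
  exact le_antisymm inf_le_left
    (le_inf le_rfl (fun p hp => LinearMap.mem_ker.mpr (harm_zero_left hp.1)))

lemma biHarmonics_right_zero (n a : ℕ) : biHarmonics n a 0 = Pab n a 0 := by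
  rw [biHarmonics_eq]
  exact le_antisymm inf_le_left
    (le_inf le_rfl (fun p hp => LinearMap.mem_ker.mpr (harm_zero_right hp.2)))

set_option maxHeartbeats 2000000 in
set_option synthInstance.maxHeartbeats 2000000 in
lemma finrank_sum {n : ℕ} (hn : 1 ≤ n) (a b : ℕ) :
    Module.finrank ℂ (biHarmonics n (a+1) (b+1)) + Module.finrank ℂ (Pab n a b)
      = Module.finrank ℂ (Pab n (a+1) (b+1)) := by
  classical
  let D : Pab n (a+1) (b+1) →ₗ[ℂ] Pab n a b :=
    (harmOp n).restrict (p := Pab n (a+1) (b+1)) (q := Pab n a b) (fun x hx => harm_mem hx)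
  have hker : LinearMap.ker D
      = (biHarmonics n (a+1) (b+1)).comap (Pab n (a+1) (b+1)).subtype := by
    ext x
    simp only [LinearMap.mem_ker, Submodule.mem_comap, Submodule.coe_subtype, biHarmonics_eq,
      Submodule.mem_inf, LinearMap.mem_ker, D, LinearMap.restrict_apply,
      Submodule.mk_eq_zero]
    exact ⟨fun h => ⟨x.2, h⟩, fun h => h.2⟩
  have hsurj : LinearMap.range D = ⊤ := by
    rw [LinearMap.range_eq_top]
    rintro ⟨p, hp⟩
    obtain ⟨q, hq, hqe⟩ := surj hn a b p hp
    exact ⟨⟨q, hq⟩, Subtype.ext hqe⟩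
  have hrn := LinearMap.finrank_range_add_finrank_ker D
  rw [hsurj, finrank_top] at hrn
  have e2 : Module.finrank ℂ (LinearMap.ker D)
      = Module.finrank ℂ (biHarmonics n (a+1) (b+1)) := by
    rw [hker]
    exact (Submodule.comapSubtypeEquivOfLe (biH_le n (a+1) (b+1))).finrank_eq
  omega

lemma N1 (m a : ℕ) :
    (m + 1) * (a + m + 1).choose (m + 1) = (a + m + 1) * (a + m).choose m := by
  have h := Nat.add_one_mul_choose_eq (a + m) m
  rw [mul_comm]
  exact h.symm

lemma N2 (m a : ℕ) : (m + a + 1).choose a = (a + m + 1).choose (m + 1) := by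
  have h := Nat.choose_symm (show m + 1 ≤ a + m + 1 by omega)
  rw [show a + m + 1 - (m + 1) = a by omega] at h
  rw [show m + a + 1 = a + m + 1 by ring, h]

lemma N3 (m a : ℕ) :
    (a + m + 1).choose (m + 1) * (m + 1) = (a + m + 1).choose m * (a + 1) := by
  rw [Nat.choose_succ_right_eq]
  congr 1
  omega

lemma qA (m a : ℕ) : ((m + a + 1).choose a : ℚ)
    = ((m : ℚ) + 1 + a) * ((a + m).choose m) / ((m : ℚ) + 1) := by
  have hm : ((m : ℚ) + 1) ≠ 0 := by positivity
  have hm' : (1 + (m : ℚ)) ≠ 0 := by positivity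
  have hm2 : ((m : ℚ) + 2 - 1) ≠ 0 := by
    intro h
    have : (m : ℚ) = -1 := by linarith
    have := m.cast_nonneg (α := ℚ)
    linarith
  rw [eq_div_iff hm, N2 m a]
  have := N1 m a
  have := congrArg (fun k : ℕ => (k : ℚ)) this
  push_cast at this
  linarith [this]

lemma qB (m a : ℕ) : ((m + a + 1).choose a : ℚ)
    = ((a : ℚ) + 1) * ((a + m + 1).choose m) / ((m : ℚ) + 1) := by
  have hm : ((m : ℚ) + 1) ≠ 0 := by positivity
  have hm' : (1 + (m : ℚ)) ≠ 0 := by positivity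
  have hm2 : ((m : ℚ) + 2 - 1) ≠ 0 := by
    intro h
    have : (m : ℚ) = -1 := by linarith
    have := m.cast_nonneg (α := ℚ)
    linarith
  rw [eq_div_iff hm, N2 m a]
  have := N3 m a
  have := congrArg (fun k : ℕ => (k : ℚ)) this
  push_cast at this
  linarith [this]

end BiHarmAux

set_option maxHeartbeats 2000000 in
set_option synthInstance.maxHeartbeats 2000000 in
theorem dim_biharmonics (n a b : ℕ) (hn : 2 ≤ n) :
    (Module.finrank ℂ (biHarmonics n a b) : ℚ) =
      ((n : ℚ) + a + b - 1) / ((n : ℚ) - 1) *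
        (Nat.choose (a + n - 2) (n - 2)) * (Nat.choose (b + n - 2) (n - 2)) := by
  obtain ⟨m, rfl⟩ : ∃ m, n = m + 2 := ⟨n - 2, by omega⟩
  have hm : ((m : ℚ) + 1) ≠ 0 := by positivity
  have hm' : (1 + (m : ℚ)) ≠ 0 := by positivity
  have hm2 : ((m : ℚ) + 2 - 1) ≠ 0 := by
    intro h
    have : (m : ℚ) = -1 := by linarith
    have := m.cast_nonneg (α := ℚ)
    linarith
  have hfr : ∀ a b : ℕ, Module.finrank ℂ (BiHarmAux.Pab (m+2) a b)
      = (m + a + 1).choose a * (m + b + 1).choose b := by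
    intro a b
    rw [BiHarmAux.finrank_Pab]
    congr 2 <;> omega
  rw [show a + (m + 2) - 2 = a + m by omega, show b + (m + 2) - 2 = b + m by omega,
    show m + 2 - 2 = m by omega]
  rcases a with _ | a
  · rw [BiHarmAux.biHarmonics_left_zero, hfr 0 b,
      show (0:ℕ) + m = m by omega, Nat.choose_self, Nat.choose_zero_right]
    push_cast
    rw [BiHarmAux.qA m b]
    push_cast
    field_simp [hm', hm2]
    ring
  · rcases b with _ | b
    · rw [BiHarmAux.biHarmonics_right_zero, hfr (a+1) 0,
        show (0:ℕ) + m = m by omega, Nat.choose_self, Nat.choose_zero_right]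
      push_cast
      rw [BiHarmAux.qA m (a+1)]
      push_cast
      field_simp [hm', hm2]
      ring
    · have hs := BiHarmAux.finrank_sum (show 1 ≤ m + 2 by omega) a b
      have hcast : (Module.finrank ℂ (biHarmonics (m+2) (a+1) (b+1)) : ℚ)
          = ((Module.finrank ℂ (BiHarmAux.Pab (m+2) (a+1) (b+1)) : ℚ))
            - Module.finrank ℂ (BiHarmAux.Pab (m+2) a b) := by
        have h := congrArg (fun k : ℕ => (k : ℚ)) hs
        push_cast at h
        linarith
      rw [hcast, hfr (a+1) (b+1), hfr a b]
      push_cast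
      rw [BiHarmAux.qA m (a+1), BiHarmAux.qA m (b+1), BiHarmAux.qB m a, BiHarmAux.qB m b,
        show a + m + 1 = a + 1 + m by ring, show b + m + 1 = b + 1 + m by ring]
      push_cast
      field_simp [hm', hm2]
      ring
end
end

section
/- Let n ≥ 1 and let f : ℝ^n × ℝ^n × ℝ^n → ℂ be smooth with D_s f = 0 and D_t f = 0 identically. Define the operators X_z g = (i/2) Σ_{j=1}^n (x_j − i y_j)( q_j g + ∂g/∂q_j ) and X_z† g = (i/2) Σ_{j=1}^n (x_j + i y_j)( q_j g − ∂g/∂q_j ). Then for every ℓ ∈ ℕ the iterates X_z^ℓ f and (X_z†)^ℓ f are harmonic: Σ_{j=1}^n ( ∂²/∂x_j² + ∂²/∂y_j² )( X_z^ℓ f ) = 0 and Σ_{j=1}^n ( ∂²/∂x_j² + ∂²/∂y_j² )( (X_z†)^ℓ f ) = 0. -/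
open Complex Finset Matrix

noncomputable section

/-- `X_z g = (i/2) Σ_j (x_j − i y_j)(q_j g + ∂g/∂q_j)`. -/
noncomputable def XzOp (n : ℕ) (g : Vec n → ℂ) : Vec n → ℂ :=
  fun p => Complex.I / 2 * ∑ j : Fin n,
    ((p.1 j : ℂ) - Complex.I * (p.2.1 j : ℂ)) * ((p.2.2 j : ℂ) * g p + pdq n j g p)

/-- `X_z† g = (i/2) Σ_j (x_j + i y_j)(q_j g − ∂g/∂q_j)`. -/
noncomputable def XzdOp (n : ℕ) (g : Vec n → ℂ) : Vec n → ℂ :=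
  fun p => Complex.I / 2 * ∑ j : Fin n,
    ((p.1 j : ℂ) + Complex.I * (p.2.1 j : ℂ)) * ((p.2.2 j : ℂ) * g p - pdq n j g p)

variable {n : ℕ}

def Dd (v : Vec n) (g : Vec n → ℂ) : Vec n → ℂ := fun p => fderiv ℝ g p v

@[fun_prop]
theorem Dd_smooth {g : Vec n → ℂ} (hg : ContDiff ℝ (⊤ : ℕ∞) g) (v : Vec n) :
    ContDiff ℝ (⊤ : ℕ∞) (Dd v g) := by
  have h1 : ContDiff ℝ (⊤ : ℕ∞) (fderiv ℝ g) := hg.fderiv_right (by simp)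
  exact h1.clm_apply contDiff_const

@[fun_prop] theorem Dd_diff {g : Vec n → ℂ} (hg : ContDiff ℝ (⊤ : ℕ∞) g) (v : Vec n) :
    Differentiable ℝ (Dd v g) :=
  (Dd_smooth hg v).differentiable (by simp)

def Cx (k : Fin n) : Vec n → ℂ := fun p => (p.1 k : ℂ)
def Cy (k : Fin n) : Vec n → ℂ := fun p => (p.2.1 k : ℂ)
def Cq (k : Fin n) : Vec n → ℂ := fun p => (p.2.2 k : ℂ)

def Lx (k : Fin n) : Vec n →L[ℝ] ℂ :=
  Complex.ofRealCLM.comp ((ContinuousLinearMap.proj k).comp (ContinuousLinearMap.fst ℝ _ _))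
def Ly (k : Fin n) : Vec n →L[ℝ] ℂ :=
  Complex.ofRealCLM.comp (((ContinuousLinearMap.proj k).comp (ContinuousLinearMap.fst ℝ _ _)).comp (ContinuousLinearMap.snd ℝ _ _))
def Lq (k : Fin n) : Vec n →L[ℝ] ℂ :=
  Complex.ofRealCLM.comp (((ContinuousLinearMap.proj k).comp (ContinuousLinearMap.snd ℝ _ _)).comp (ContinuousLinearMap.snd ℝ _ _))

theorem Cx_eq (k : Fin n) : Cx (n := n) k = Lx k := rfl
theorem Cy_eq (k : Fin n) : Cy (n := n) k = Ly k := rfl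
theorem Cq_eq (k : Fin n) : Cq (n := n) k = Lq k := rfl

@[fun_prop] theorem Cx_smooth (k : Fin n) : ContDiff ℝ (⊤ : ℕ∞) (Cx (n := n) k) :=
  (Lx k).contDiff
@[fun_prop] theorem Cy_smooth (k : Fin n) : ContDiff ℝ (⊤ : ℕ∞) (Cy (n := n) k) :=
  (Ly k).contDiff
@[fun_prop] theorem Cq_smooth (k : Fin n) : ContDiff ℝ (⊤ : ℕ∞) (Cq (n := n) k) :=
  (Lq k).contDiff
@[fun_prop] theorem Cx_diff (k : Fin n) : Differentiable ℝ (Cx (n := n) k) := (Lx k).differentiable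
@[fun_prop] theorem Cy_diff (k : Fin n) : Differentiable ℝ (Cy (n := n) k) := (Ly k).differentiable
@[fun_prop] theorem Cq_diff (k : Fin n) : Differentiable ℝ (Cq (n := n) k) := (Lq k).differentiable

@[fun_prop] theorem sum_smooth {ι : Type*} (s : Finset ι) (F : ι → Vec n → ℂ)
    (h : ∀ i, ContDiff ℝ (⊤ : ℕ∞) (F i)) :
    ContDiff ℝ (⊤ : ℕ∞) (fun p => ∑ i ∈ s, F i p) :=
  ContDiff.sum fun i _ => h i
@[fun_prop] theorem sum_diff {ι : Type*} (s : Finset ι) (F : ι → Vec n → ℂ)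
    (h : ∀ i, Differentiable ℝ (F i)) :
    Differentiable ℝ (fun p => ∑ i ∈ s, F i p) :=
  Differentiable.fun_sum fun i _ => h i

/-! basis directions -/
def ex (j : Fin n) : Vec n := (Pi.single j 1, 0, 0)
def ey (j : Fin n) : Vec n := (0, Pi.single j 1, 0)
def eqv (j : Fin n) : Vec n := (0, 0, Pi.single j 1)

/-! ## Derivative calculus for `Dd` -/

theorem Dd_add (v : Vec n) {a b : Vec n → ℂ} {p : Vec n}
    (ha : DifferentiableAt ℝ a p) (hb : DifferentiableAt ℝ b p) :
    Dd v (fun p => a p + b p) p = Dd v a p + Dd v b p := by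
  simp [Dd, fderiv_fun_add ha hb]

theorem Dd_sub (v : Vec n) {a b : Vec n → ℂ} {p : Vec n}
    (ha : DifferentiableAt ℝ a p) (hb : DifferentiableAt ℝ b p) :
    Dd v (fun p => a p - b p) p = Dd v a p - Dd v b p := by
  simp [Dd, fderiv_fun_sub ha hb]

theorem Dd_mul (v : Vec n) {a b : Vec n → ℂ} {p : Vec n}
    (ha : DifferentiableAt ℝ a p) (hb : DifferentiableAt ℝ b p) :
    Dd v (fun p => a p * b p) p = Dd v a p * b p + a p * Dd v b p := by
  simp [Dd, fderiv_fun_mul ha hb]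
  ring

theorem Dd_const_mul (v : Vec n) (c : ℂ) {a : Vec n → ℂ} {p : Vec n}
    (ha : DifferentiableAt ℝ a p) :
    Dd v (fun p => c * a p) p = c * Dd v a p := by
  simp [Dd, fderiv_const_mul ha c]

theorem Dd_sum (v : Vec n) {ι : Type*} {s : Finset ι} {F : ι → Vec n → ℂ} {p : Vec n}
    (hF : ∀ i ∈ s, DifferentiableAt ℝ (F i) p) :
    Dd v (fun p => ∑ i ∈ s, F i p) p = ∑ i ∈ s, Dd v (F i) p := by
  simp [Dd, fderiv_fun_sum hF]

theorem Dd_const (v : Vec n) (c : ℂ) (p : Vec n) : Dd v (fun _ => c) p = 0 := by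
  simp [Dd]

theorem Dd_Cx (v : Vec n) (k : Fin n) (p : Vec n) : Dd v (Cx k) p = (v.1 k : ℂ) := by
  rw [Cx_eq]; simp [Dd, (Lx k).fderiv]; rfl
theorem Dd_Cy (v : Vec n) (k : Fin n) (p : Vec n) : Dd v (Cy k) p = (v.2.1 k : ℂ) := by
  rw [Cy_eq]; simp [Dd, (Ly k).fderiv]; rfl
theorem Dd_Cq (v : Vec n) (k : Fin n) (p : Vec n) : Dd v (Cq k) p = (v.2.2 k : ℂ) := by
  rw [Cq_eq]; simp [Dd, (Lq k).fderiv]; rfl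

@[simp] theorem Dd_ex_Cx (j k : Fin n) (p : Vec n) :
    Dd (ex j) (Cx k) p = if k = j then 1 else 0 := by
  rw [Dd_Cx]; simp [ex, Pi.single_apply, apply_ite (Complex.ofReal)]
@[simp] theorem Dd_ey_Cx (j k : Fin n) (p : Vec n) : Dd (ey j) (Cx k) p = 0 := by
  rw [Dd_Cx]; simp [ey]
@[simp] theorem Dd_eqv_Cx (j k : Fin n) (p : Vec n) : Dd (eqv j) (Cx k) p = 0 := by
  rw [Dd_Cx]; simp [eqv]
@[simp] theorem Dd_ex_Cy (j k : Fin n) (p : Vec n) : Dd (ex j) (Cy k) p = 0 := by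
  rw [Dd_Cy]; simp [ex]
@[simp] theorem Dd_ey_Cy (j k : Fin n) (p : Vec n) :
    Dd (ey j) (Cy k) p = if k = j then 1 else 0 := by
  rw [Dd_Cy]; simp [ey, Pi.single_apply, apply_ite (Complex.ofReal)]
@[simp] theorem Dd_eqv_Cy (j k : Fin n) (p : Vec n) : Dd (eqv j) (Cy k) p = 0 := by
  rw [Dd_Cy]; simp [eqv]
@[simp] theorem Dd_ex_Cq (j k : Fin n) (p : Vec n) : Dd (ex j) (Cq k) p = 0 := by
  rw [Dd_Cq]; simp [ex]
@[simp] theorem Dd_ey_Cq (j k : Fin n) (p : Vec n) : Dd (ey j) (Cq k) p = 0 := by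
  rw [Dd_Cq]; simp [ey]
@[simp] theorem Dd_eqv_Cq (j k : Fin n) (p : Vec n) :
    Dd (eqv j) (Cq k) p = if k = j then 1 else 0 := by
  rw [Dd_Cq]; simp [eqv, Pi.single_apply, apply_ite (Complex.ofReal)]

theorem Dd_swap {g : Vec n → ℂ} (hg : ContDiff ℝ (⊤ : ℕ∞) g) (v w : Vec n) :
    Dd v (Dd w g) = Dd w (Dd v g) := by
  funext p
  have hs : IsSymmSndFDerivAt ℝ g p :=
    hg.contDiffAt.isSymmSndFDerivAt (by rw [minSmoothness_of_isRCLikeNormedField]; exact WithTop.coe_le_coe.2 (le_top : (2:ℕ∞) ≤ ⊤))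
  have h1 : ContDiff ℝ (⊤ : ℕ∞) (fderiv ℝ g) := hg.fderiv_right (by simp)
  have key : ∀ u u' : Vec n, Dd u (Dd u' g) p = fderiv ℝ (fderiv ℝ g) p u u' := by
    intro u u'
    show (fderiv ℝ (fun q => (fderiv ℝ g q) u') p) u = _
    rw [fderiv_clm_apply (h1.differentiable (by simp) p) (differentiableAt_const u')]
    simp
  rw [key, key, hs v w]


theorem pdx_eq {f : Vec n → ℂ} (hf : ContDiff ℝ (⊤ : ℕ∞) f) (j : Fin n) :
    pdx n j f = Dd (ex j) f := by
  funext p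
  have hc : HasDerivAt (fun t : ℝ => ((Function.update p.1 j t, p.2.1, p.2.2) : Vec n))
      (ex j) (p.1 j) :=
    (hasDerivAt_update p.1 j (p.1 j)).prodMk (hasDerivAt_const _ _)
  have hpt : ((Function.update p.1 j (p.1 j), p.2.1, p.2.2) : Vec n) = p := by
    simp [Function.update_eq_self]
  have hfd : HasFDerivAt f (fderiv ℝ f p) ((Function.update p.1 j (p.1 j), p.2.1, p.2.2) : Vec n) := by
    rw [hpt]; exact (hf.differentiable (by simp) p).hasFDerivAt
  exact (hfd.comp_hasDerivAt _ hc).deriv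

theorem pdy_eq {f : Vec n → ℂ} (hf : ContDiff ℝ (⊤ : ℕ∞) f) (j : Fin n) :
    pdy n j f = Dd (ey j) f := by
  funext p
  have hc : HasDerivAt (fun t : ℝ => ((p.1, Function.update p.2.1 j t, p.2.2) : Vec n))
      (ey j) (p.2.1 j) :=
    (hasDerivAt_const _ _).prodMk ((hasDerivAt_update p.2.1 j (p.2.1 j)).prodMk (hasDerivAt_const _ _))
  have hpt : ((p.1, Function.update p.2.1 j (p.2.1 j), p.2.2) : Vec n) = p := by
    simp [Function.update_eq_self]
  have hfd : HasFDerivAt f (fderiv ℝ f p) ((p.1, Function.update p.2.1 j (p.2.1 j), p.2.2) : Vec n) := by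
    rw [hpt]; exact (hf.differentiable (by simp) p).hasFDerivAt
  exact (hfd.comp_hasDerivAt _ hc).deriv

theorem pdq_eq {f : Vec n → ℂ} (hf : ContDiff ℝ (⊤ : ℕ∞) f) (j : Fin n) :
    pdq n j f = Dd (eqv j) f := by
  funext p
  have hc : HasDerivAt (fun t : ℝ => ((p.1, p.2.1, Function.update p.2.2 j t) : Vec n))
      (eqv j) (p.2.2 j) :=
    (hasDerivAt_const _ _).prodMk ((hasDerivAt_const _ _).prodMk (hasDerivAt_update p.2.2 j (p.2.2 j)))
  have hpt : ((p.1, p.2.1, Function.update p.2.2 j (p.2.2 j)) : Vec n) = p := by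
    simp [Function.update_eq_self]
  have hfd : HasFDerivAt f (fderiv ℝ f p) ((p.1, p.2.1, Function.update p.2.2 j (p.2.2 j)) : Vec n) := by
    rw [hpt]; exact (hf.differentiable (by simp) p).hasFDerivAt
  exact (hfd.comp_hasDerivAt _ hc).deriv


/-! function-level derivative rules -/
theorem Dd_add_fn (v : Vec n) {a b : Vec n → ℂ}
    (ha : ContDiff ℝ (⊤ : ℕ∞) a) (hb : ContDiff ℝ (⊤ : ℕ∞) b) :
    Dd v (fun p => a p + b p) = fun p => Dd v a p + Dd v b p := by
  funext p
  exact Dd_add v ((ha.differentiable (by simp)).differentiableAt)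
    ((hb.differentiable (by simp)).differentiableAt)

theorem Dd_sub_fn (v : Vec n) {a b : Vec n → ℂ}
    (ha : ContDiff ℝ (⊤ : ℕ∞) a) (hb : ContDiff ℝ (⊤ : ℕ∞) b) :
    Dd v (fun p => a p - b p) = fun p => Dd v a p - Dd v b p := by
  funext p
  exact Dd_sub v ((ha.differentiable (by simp)).differentiableAt)
    ((hb.differentiable (by simp)).differentiableAt)

theorem Dd_mul_fn (v : Vec n) {a b : Vec n → ℂ}
    (ha : ContDiff ℝ (⊤ : ℕ∞) a) (hb : ContDiff ℝ (⊤ : ℕ∞) b) :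
    Dd v (fun p => a p * b p) = fun p => Dd v a p * b p + a p * Dd v b p := by
  funext p
  exact Dd_mul v ((ha.differentiable (by simp)).differentiableAt)
    ((hb.differentiable (by simp)).differentiableAt)

theorem Dd_cmul_fn (v : Vec n) (c : ℂ) {a : Vec n → ℂ}
    (ha : ContDiff ℝ (⊤ : ℕ∞) a) :
    Dd v (fun p => c * a p) = fun p => c * Dd v a p := by
  funext p
  exact Dd_const_mul v c ((ha.differentiable (by simp)).differentiableAt)

theorem Dd_sum_fn (v : Vec n) {ι : Type*} {s : Finset ι} {F : ι → Vec n → ℂ}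
    (hF : ∀ i, ContDiff ℝ (⊤ : ℕ∞) (F i)) :
    Dd v (fun p => ∑ i ∈ s, F i p) = fun p => ∑ i ∈ s, Dd v (F i) p := by
  funext p
  exact Dd_sum v fun i _ => ((hF i).differentiable (by simp)).differentiableAt

theorem Dd_const_fn (v : Vec n) (c : ℂ) : Dd v (fun _ => c) = fun _ => 0 := by
  funext p; exact Dd_const v c p

/-! ## the building-block operators -/
def opS (j : Fin n) (g : Vec n → ℂ) : Vec n → ℂ :=
  fun p => Complex.I * Cq j p * Dd (ey j) g p - Dd (eqv j) (Dd (ex j) g) p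
def opT (j : Fin n) (g : Vec n → ℂ) : Vec n → ℂ :=
  fun p => Complex.I * Cq j p * Dd (ex j) g p + Dd (ey j) (Dd (eqv j) g) p
def opL (j : Fin n) (g : Vec n → ℂ) : Vec n → ℂ :=
  fun p => Dd (ex j) (Dd (ex j) g) p + Dd (ey j) (Dd (ey j) g) p
def opM (ε : ℂ) (k : Fin n) (g : Vec n → ℂ) : Vec n → ℂ :=
  fun p => (Cx k p - ε * Complex.I * Cy k p) * (Cq k p * g p + ε * Dd (eqv k) g p)

@[fun_prop] theorem Sop_smooth {g : Vec n → ℂ} (hg : ContDiff ℝ (⊤ : ℕ∞) g) (j : Fin n) :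
    ContDiff ℝ (⊤ : ℕ∞) (opS j g) := by unfold opS; fun_prop
@[fun_prop] theorem Top_smooth {g : Vec n → ℂ} (hg : ContDiff ℝ (⊤ : ℕ∞) g) (j : Fin n) :
    ContDiff ℝ (⊤ : ℕ∞) (opT j g) := by unfold opT; fun_prop
@[fun_prop] theorem Lop_smooth {g : Vec n → ℂ} (hg : ContDiff ℝ (⊤ : ℕ∞) g) (j : Fin n) :
    ContDiff ℝ (⊤ : ℕ∞) (opL j g) := by unfold opL; fun_prop
@[fun_prop] theorem Mop_smooth (ε : ℂ) {g : Vec n → ℂ} (hg : ContDiff ℝ (⊤ : ℕ∞) g) (k : Fin n) :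
    ContDiff ℝ (⊤ : ℕ∞) (opM ε k g) := by unfold opM; fun_prop


/-! ## bridges between the `pd` operators and the `Dd` building blocks -/
theorem Ds_eq {g : Vec n → ℂ} (hg : ContDiff ℝ (⊤ : ℕ∞) g) :
    Ds n g = fun p => ∑ j : Fin n, opS j g p := by
  unfold Ds opS
  simp (disch := fun_prop) only [pdx_eq, pdy_eq, pdq_eq]
  rfl

theorem Dt_eq {g : Vec n → ℂ} (hg : ContDiff ℝ (⊤ : ℕ∞) g) :
    Dt n g = fun p => ∑ j : Fin n, opT j g p := by
  unfold Dt opT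
  simp (disch := fun_prop) only [pdx_eq, pdy_eq, pdq_eq]
  rfl

theorem Lap_eq {g : Vec n → ℂ} (hg : ContDiff ℝ (⊤ : ℕ∞) g) :
    Lap n g = fun p => ∑ j : Fin n, opL j g p := by
  unfold Lap opL
  simp (disch := fun_prop) only [pdx_eq, pdy_eq, pdq_eq]

theorem Xz_eq {g : Vec n → ℂ} (hg : ContDiff ℝ (⊤ : ℕ∞) g) :
    XzOp n g = fun p => Complex.I / 2 * ∑ k : Fin n, opM 1 k g p := by
  unfold XzOp opM
  simp (disch := fun_prop) only [pdq_eq]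
  funext p
  congr 1
  apply Finset.sum_congr rfl
  intro k _
  unfold Cx Cy Cq
  ring

theorem Xzd_eq {g : Vec n → ℂ} (hg : ContDiff ℝ (⊤ : ℕ∞) g) :
    XzdOp n g = fun p => Complex.I / 2 * ∑ k : Fin n, opM (-1) k g p := by
  unfold XzdOp opM
  simp (disch := fun_prop) only [pdq_eq]
  funext p
  congr 1
  apply Finset.sum_congr rfl
  intro k _
  unfold Cx Cy Cq
  ring

@[fun_prop] theorem XzOp_smooth {g : Vec n → ℂ} (hg : ContDiff ℝ (⊤ : ℕ∞) g) :
    ContDiff ℝ (⊤ : ℕ∞) (XzOp n g) := by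
  rw [Xz_eq hg]; fun_prop
@[fun_prop] theorem XzdOp_smooth {g : Vec n → ℂ} (hg : ContDiff ℝ (⊤ : ℕ∞) g) :
    ContDiff ℝ (⊤ : ℕ∞) (XzdOp n g) := by
  rw [Xzd_eq hg]; fun_prop
theorem Ds_smooth {g : Vec n → ℂ} (hg : ContDiff ℝ (⊤ : ℕ∞) g) :
    ContDiff ℝ (⊤ : ℕ∞) (Ds n g) := by
  rw [Ds_eq hg]; fun_prop
theorem Dt_smooth {g : Vec n → ℂ} (hg : ContDiff ℝ (⊤ : ℕ∞) g) :
    ContDiff ℝ (⊤ : ℕ∞) (Dt n g) := by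
  rw [Dt_eq hg]; fun_prop

theorem Ds_zero : Ds n (fun _ => 0) = fun _ => 0 := by
  unfold Ds pdx pdy pdq; simp
theorem Dt_zero : Dt n (fun _ => 0) = fun _ => 0 := by
  unfold Dt pdx pdy pdq; simp
theorem XzOp_zero : XzOp n (fun _ => 0) = fun _ => 0 := by
  unfold XzOp pdq; simp


/-! ## linearity of the building blocks -/
variable {ι : Type*}

theorem opS_sum (j : Fin n) {s : Finset ι} {F : ι → Vec n → ℂ}
    (hF : ∀ i, ContDiff ℝ (⊤ : ℕ∞) (F i)) :
    opS j (fun p => ∑ i ∈ s, F i p) = fun p => ∑ i ∈ s, opS j (F i) p := by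
  unfold opS
  rw [Dd_sum_fn _ hF, Dd_sum_fn _ hF, Dd_sum_fn _ (fun i => Dd_smooth (hF i) _)]
  funext p
  rw [Finset.mul_sum, ← Finset.sum_sub_distrib]

theorem opT_sum (j : Fin n) {s : Finset ι} {F : ι → Vec n → ℂ}
    (hF : ∀ i, ContDiff ℝ (⊤ : ℕ∞) (F i)) :
    opT j (fun p => ∑ i ∈ s, F i p) = fun p => ∑ i ∈ s, opT j (F i) p := by
  unfold opT
  rw [Dd_sum_fn _ hF, Dd_sum_fn _ hF, Dd_sum_fn _ (fun i => Dd_smooth (hF i) _)]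
  funext p
  rw [Finset.mul_sum, ← Finset.sum_add_distrib]

theorem opL_sum (j : Fin n) {s : Finset ι} {F : ι → Vec n → ℂ}
    (hF : ∀ i, ContDiff ℝ (⊤ : ℕ∞) (F i)) :
    opL j (fun p => ∑ i ∈ s, F i p) = fun p => ∑ i ∈ s, opL j (F i) p := by
  unfold opL
  rw [Dd_sum_fn _ hF, Dd_sum_fn _ hF, Dd_sum_fn _ (fun i => Dd_smooth (hF i) _),
    Dd_sum_fn _ (fun i => Dd_smooth (hF i) _)]
  funext p
  rw [← Finset.sum_add_distrib]

theorem opM_sum (ε : ℂ) (k : Fin n) {s : Finset ι} {F : ι → Vec n → ℂ}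
    (hF : ∀ i, ContDiff ℝ (⊤ : ℕ∞) (F i)) :
    opM ε k (fun p => ∑ i ∈ s, F i p) = fun p => ∑ i ∈ s, opM ε k (F i) p := by
  unfold opM
  rw [Dd_sum_fn _ hF]
  funext p
  rw [Finset.mul_sum, Finset.mul_sum, ← Finset.sum_add_distrib, Finset.mul_sum]

theorem opS_cmul (j : Fin n) (c : ℂ) {h : Vec n → ℂ} (hh : ContDiff ℝ (⊤ : ℕ∞) h) :
    opS j (fun p => c * h p) = fun p => c * opS j h p := by
  unfold opS
  rw [Dd_cmul_fn _ c hh, Dd_cmul_fn _ c hh, Dd_cmul_fn _ c (Dd_smooth hh _)]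
  funext p; ring

theorem opT_cmul (j : Fin n) (c : ℂ) {h : Vec n → ℂ} (hh : ContDiff ℝ (⊤ : ℕ∞) h) :
    opT j (fun p => c * h p) = fun p => c * opT j h p := by
  unfold opT
  rw [Dd_cmul_fn _ c hh, Dd_cmul_fn _ c hh, Dd_cmul_fn _ c (Dd_smooth hh _)]
  funext p; ring

theorem opL_cmul (j : Fin n) (c : ℂ) {h : Vec n → ℂ} (hh : ContDiff ℝ (⊤ : ℕ∞) h) :
    opL j (fun p => c * h p) = fun p => c * opL j h p := by
  unfold opL
  rw [Dd_cmul_fn _ c hh, Dd_cmul_fn _ c hh, Dd_cmul_fn _ c (Dd_smooth hh _),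
    Dd_cmul_fn _ c (Dd_smooth hh _)]
  funext p; ring

theorem opM_cmul (ε : ℂ) (k : Fin n) (c : ℂ) {h : Vec n → ℂ} (hh : ContDiff ℝ (⊤ : ℕ∞) h) :
    opM ε k (fun p => c * h p) = fun p => c * opM ε k h p := by
  unfold opM
  rw [Dd_cmul_fn _ c hh]
  funext p; ring


theorem I_pow_three : Complex.I ^ 3 = -Complex.I := by
  rw [pow_succ, Complex.I_sq]; ring


theorem ST_comm {g : Vec n → ℂ} (hg : ContDiff ℝ (⊤ : ℕ∞) g) (j k : Fin n) (p : Vec n) :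
    opS j (opT k g) p - opT k (opS j g) p
      = if k = j then -Complex.I * opL j g p else 0 := by
  unfold opS opT opL
  simp (disch := fun_prop) only [Dd_add_fn, Dd_sub_fn, Dd_mul_fn, Dd_cmul_fn,
    Dd_ex_Cx, Dd_ey_Cx, Dd_eqv_Cx, Dd_ex_Cy, Dd_ey_Cy, Dd_eqv_Cy,
    Dd_ex_Cq, Dd_ey_Cq, Dd_eqv_Cq, Dd_const_fn]
  have h1 : Dd (ey j) (Dd (ex k) g) = Dd (ex k) (Dd (ey j) g) := Dd_swap hg _ _
  have h2 : Dd (ey j) (Dd (ey k) (Dd (eqv k) g)) = Dd (ey k) (Dd (eqv k) (Dd (ey j) g)) := by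
    rw [Dd_swap (Dd_smooth hg _) (ey j) (ey k), Dd_swap hg (ey j) (eqv k)]
  have h3 : Dd (eqv j) (Dd (ex j) (Dd (ex k) g)) = Dd (ex k) (Dd (eqv j) (Dd (ex j) g)) := by
    rw [Dd_swap hg (ex j) (ex k), Dd_swap (Dd_smooth hg _) (eqv j) (ex k)]
  have h4 : Dd (eqv j) (Dd (ex j) (Dd (ey k) (Dd (eqv k) g)))
      = Dd (ey k) (Dd (eqv k) (Dd (eqv j) (Dd (ex j) g))) := by
    rw [Dd_swap (Dd_smooth hg _) (ex j) (ey k), Dd_swap hg (ex j) (eqv k),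
      Dd_swap (Dd_smooth (Dd_smooth hg _) _) (eqv j) (ey k),
      Dd_swap (Dd_smooth hg _) (eqv j) (eqv k)]
  rw [h1, h2, h3, h4]
  rcases eq_or_ne k j with rfl | hkj
  · simp only [if_pos rfl, eq_self_iff_true, if_true]
    ring
  · simp only [if_neg hkj, if_neg (Ne.symm hkj)]
    ring


theorem ATM_comm {g : Vec n → ℂ} (hg : ContDiff ℝ (⊤ : ℕ∞) g) {ε : ℂ} (hε : ε = 1 ∨ ε = -1)
    (j k : Fin n) (p : Vec n) :
    (opT j (opM ε k g) p - ε * Complex.I * opS j (opM ε k g) p)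
      - (opM ε k (opT j g) p - ε * Complex.I * opM ε k (opS j g) p) = 0 := by
  unfold opS opT opM
  simp (disch := fun_prop) only [Dd_add_fn, Dd_sub_fn, Dd_mul_fn, Dd_cmul_fn,
    Dd_ex_Cx, Dd_ey_Cx, Dd_eqv_Cx, Dd_ex_Cy, Dd_ey_Cy, Dd_eqv_Cy,
    Dd_ex_Cq, Dd_ey_Cq, Dd_eqv_Cq, Dd_const_fn]
  have s1 : Dd (eqv k) (Dd (ex j) g) = Dd (ex j) (Dd (eqv k) g) := Dd_swap hg _ _
  have s2 : Dd (eqv k) (Dd (ey j) g) = Dd (ey j) (Dd (eqv k) g) := Dd_swap hg _ _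
  have s3 : Dd (eqv k) (Dd (ey j) (Dd (eqv j) g)) = Dd (ey j) (Dd (eqv j) (Dd (eqv k) g)) := by
    rw [Dd_swap (Dd_smooth hg _) (eqv k) (ey j), Dd_swap hg (eqv k) (eqv j)]
  have s4 : Dd (eqv k) (Dd (eqv j) (Dd (ex j) g)) = Dd (eqv j) (Dd (ex j) (Dd (eqv k) g)) := by
    rw [Dd_swap (Dd_smooth hg _) (eqv k) (eqv j), Dd_swap hg (eqv k) (ex j)]
  rw [s1, s2, s3, s4]
  rcases eq_or_ne k j with rfl | hkj
  · simp only [if_pos rfl, eq_self_iff_true, if_true]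
    rcases hε with rfl | rfl <;> (try ring) <;>
      (ring_nf; simp only [Complex.I_sq, _root_.I_pow_three]; try ring_nf)
  · simp only [if_neg hkj, if_neg (Ne.symm hkj)]
    rcases hε with rfl | rfl <;> (try ring) <;>
      (ring_nf; simp only [Complex.I_sq, _root_.I_pow_three]; try ring_nf)


theorem LM_comm {g : Vec n → ℂ} (hg : ContDiff ℝ (⊤ : ℕ∞) g) {ε : ℂ} (hε : ε = 1 ∨ ε = -1)
    (j k : Fin n) (p : Vec n) :
    opL j (opM ε k g) p - opM ε k (opL j g) p
      = if k = j then
          2 * (Cq j p * Dd (ex j) g p + ε * Dd (eqv j) (Dd (ex j) g) p)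
            - 2 * ε * Complex.I * (Cq j p * Dd (ey j) g p + ε * Dd (eqv j) (Dd (ey j) g) p)
        else 0 := by
  unfold opL opM
  simp (disch := fun_prop) only [Dd_add_fn, Dd_sub_fn, Dd_mul_fn, Dd_cmul_fn,
    Dd_ex_Cx, Dd_ey_Cx, Dd_eqv_Cx, Dd_ex_Cy, Dd_ey_Cy, Dd_eqv_Cy,
    Dd_ex_Cq, Dd_ey_Cq, Dd_eqv_Cq, Dd_const_fn]
  have s3 : Dd (eqv k) (Dd (ex j) (Dd (ex j) g)) = Dd (ex j) (Dd (ex j) (Dd (eqv k) g)) := by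
    rw [Dd_swap (Dd_smooth hg _) (eqv k) (ex j), Dd_swap hg (eqv k) (ex j)]
  have s4 : Dd (eqv k) (Dd (ey j) (Dd (ey j) g)) = Dd (ey j) (Dd (ey j) (Dd (eqv k) g)) := by
    rw [Dd_swap (Dd_smooth hg _) (eqv k) (ey j), Dd_swap hg (eqv k) (ey j)]
  have s5 : Dd (eqv j) (Dd (ex j) g) = Dd (ex j) (Dd (eqv j) g) := Dd_swap hg _ _
  have s6 : Dd (eqv j) (Dd (ey j) g) = Dd (ey j) (Dd (eqv j) g) := Dd_swap hg _ _
  rw [s3, s4, s5, s6]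
  rcases eq_or_ne k j with rfl | hkj
  · simp only [if_pos rfl, eq_self_iff_true, if_true]
    rcases hε with rfl | rfl <;> (try ring) <;>
      (ring_nf; simp only [Complex.I_sq, I_pow_three]; try ring_nf)
  · simp only [if_neg hkj, if_neg (Ne.symm hkj)]
    rcases hε with rfl | rfl <;> (try ring) <;>
      (ring_nf; simp only [Complex.I_sq, I_pow_three]; try ring_nf)


theorem opM_sub_cmul (ε : ℂ) (k : Fin n) (c : ℂ) {a b : Vec n → ℂ}
    (ha : ContDiff ℝ (⊤ : ℕ∞) a) (hb : ContDiff ℝ (⊤ : ℕ∞) b) :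
    opM ε k (fun p => a p - c * b p) = fun p => opM ε k a p - c * opM ε k b p := by
  unfold opM
  rw [Dd_sub_fn _ ha (by fun_prop), Dd_cmul_fn _ c hb]
  funext p; ring

/-- The Dolbeault-dual operator in `Dd` form. -/
def XM (ε : ℂ) (g : Vec n → ℂ) : Vec n → ℂ :=
  fun p => Complex.I / 2 * ∑ k : Fin n, opM ε k g p

@[fun_prop] theorem XM_smooth (ε : ℂ) {g : Vec n → ℂ} (hg : ContDiff ℝ (⊤ : ℕ∞) g) :
    ContDiff ℝ (⊤ : ℕ∞) (XM ε g) := by unfold XM; fun_prop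

theorem Xz_eq' {g : Vec n → ℂ} (hg : ContDiff ℝ (⊤ : ℕ∞) g) : XzOp n g = XM 1 g := Xz_eq hg
theorem Xzd_eq' {g : Vec n → ℂ} (hg : ContDiff ℝ (⊤ : ℕ∞) g) : XzdOp n g = XM (-1) g :=
  Xzd_eq hg

theorem XM_zero (ε : ℂ) : XM (n := n) ε (fun _ => 0) = fun _ => 0 := by
  unfold XM opM
  simp only [Dd_const_fn]
  funext p; simp

/-- `Lap ∘ X_ε = X_ε ∘ Lap + (Dt - ε i Ds)` on smooth functions. -/
theorem Lap_XM {g : Vec n → ℂ} (hg : ContDiff ℝ (⊤ : ℕ∞) g) {ε : ℂ} (hε : ε = 1 ∨ ε = -1) :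
    Lap n (XM ε g) = fun p =>
      XM ε (Lap n g) p + (Dt n g p - ε * Complex.I * Ds n g p) := by
  have hXg : ContDiff ℝ (⊤ : ℕ∞) (XM ε g) := XM_smooth ε hg
  rw [Lap_eq hXg]
  have e1 : ∀ j : Fin n, opL j (XM ε g)
      = fun p => Complex.I / 2 * ∑ k : Fin n, opL j (opM ε k g) p := by
    intro j
    unfold XM
    rw [opL_cmul j (Complex.I / 2) (by fun_prop), opL_sum j (fun k => Mop_smooth ε hg k)]
  have e2 : XM ε (Lap n g)
      = fun p => Complex.I / 2 * ∑ k : Fin n, ∑ j : Fin n, opM ε k (opL j g) p := by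
    unfold XM
    rw [Lap_eq hg]
    funext p
    congr 1
    apply Finset.sum_congr rfl
    intro k _
    exact congrFun (opM_sum ε k (fun j => Lop_smooth hg j)) p
  rw [e2]
  funext p
  simp only [e1]
  have key : ∀ j : Fin n, ∑ k : Fin n, opL j (opM ε k g) p
      = (∑ k : Fin n, opM ε k (opL j g) p)
        + (2 * (Cq j p * Dd (ex j) g p + ε * Dd (eqv j) (Dd (ex j) g) p)
            - 2 * ε * Complex.I * (Cq j p * Dd (ey j) g p + ε * Dd (eqv j) (Dd (ey j) g) p)) := by
    intro j
    rw [Finset.sum_congr rfl (fun k _ => eq_add_of_sub_eq (LM_comm hg hε j k p)),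
      Finset.sum_add_distrib, Finset.sum_ite_eq' univ j, if_pos (Finset.mem_univ j)]
    ring
  simp only [key]
  rw [Dt_eq hg, Ds_eq hg]
  simp only [mul_add, Finset.sum_add_distrib, Finset.mul_sum]
  rw [Finset.sum_comm]
  congr 1
  rw [← Finset.sum_sub_distrib]
  apply Finset.sum_congr rfl
  intro j _
  unfold opS opT
  rw [Dd_swap hg (ey j) (eqv j)]
  rcases hε with rfl | rfl <;> (try ring) <;>
    (simp only [Complex.I_sq, _root_.I_pow_three]; try ring_nf)


/-- `(Dt - ε i Ds)` commutes with `X_ε` on smooth functions. -/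
theorem A_XM {g : Vec n → ℂ} (hg : ContDiff ℝ (⊤ : ℕ∞) g) {ε : ℂ} (hε : ε = 1 ∨ ε = -1) :
    (fun p => Dt n (XM ε g) p - ε * Complex.I * Ds n (XM ε g) p)
      = XM ε (fun p => Dt n g p - ε * Complex.I * Ds n g p) := by
  have hXg : ContDiff ℝ (⊤ : ℕ∞) (XM ε g) := XM_smooth ε hg
  have eT : ∀ j : Fin n, opT j (XM ε g)
      = fun p => Complex.I / 2 * ∑ k : Fin n, opT j (opM ε k g) p := by
    intro j; unfold XM
    rw [opT_cmul j (Complex.I / 2) (by fun_prop), opT_sum j (fun k => Mop_smooth ε hg k)]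
  have eS : ∀ j : Fin n, opS j (XM ε g)
      = fun p => Complex.I / 2 * ∑ k : Fin n, opS j (opM ε k g) p := by
    intro j; unfold XM
    rw [opS_cmul j (Complex.I / 2) (by fun_prop), opS_sum j (fun k => Mop_smooth ε hg k)]
  have eA : (fun p => Dt n g p - ε * Complex.I * Ds n g p)
      = fun p => ∑ j : Fin n, (opT j g p - ε * Complex.I * opS j g p) := by
    rw [Dt_eq hg, Ds_eq hg]
    funext p
    rw [Finset.mul_sum, ← Finset.sum_sub_distrib]
  rw [eA]
  have eR : XM ε (fun p => ∑ j : Fin n, (opT j g p - ε * Complex.I * opS j g p))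
      = fun p => Complex.I / 2 * ∑ k : Fin n, ∑ j : Fin n,
          (opM ε k (opT j g) p - ε * Complex.I * opM ε k (opS j g) p) := by
    unfold XM
    funext p
    congr 1
    apply Finset.sum_congr rfl
    intro k _
    have h1 : opM ε k (fun p => ∑ j : Fin n, (fun q => opT j g q - ε * Complex.I * opS j g q) p)
        = fun p => ∑ j : Fin n, opM ε k (fun q => opT j g q - ε * Complex.I * opS j g q) p :=
      opM_sum ε k (fun j => by fun_prop)
    have h2 := congrFun h1 p
    simp only at h2
    rw [h2]
    apply Finset.sum_congr rfl
    intro j _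
    exact congrFun (opM_sub_cmul ε k (ε * Complex.I) (Top_smooth hg j) (Sop_smooth hg j)) p
  rw [eR]
  rw [Dt_eq hXg, Ds_eq hXg]
  funext p
  simp only [eT, eS]
  rw [Finset.mul_sum, ← Finset.sum_sub_distrib, Finset.sum_comm]
  rw [Finset.mul_sum]
  apply Finset.sum_congr rfl
  intro k _
  simp only [Finset.mul_sum]
  rw [← Finset.sum_sub_distrib]
  apply Finset.sum_congr rfl
  intro j _
  have hcomm := sub_eq_zero.mp (ATM_comm hg hε k j p)
  linear_combination (Complex.I / 2) * hcomm


/-- `Lap = i (Ds ∘ Dt - Dt ∘ Ds)` on smooth functions. -/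
theorem Lap_comm {g : Vec n → ℂ} (hg : ContDiff ℝ (⊤ : ℕ∞) g) :
    Lap n g = fun p => Complex.I * (Ds n (Dt n g) p - Dt n (Ds n g) p) := by
  have e1 : Ds n (Dt n g) = fun p => ∑ j : Fin n, ∑ k : Fin n, opS j (opT k g) p := by
    rw [Ds_eq (Dt_smooth hg), Dt_eq hg]
    funext p
    apply Finset.sum_congr rfl
    intro j _
    exact congrFun (opS_sum j (fun k => Top_smooth hg k)) p
  have e2 : Dt n (Ds n g) = fun p => ∑ j : Fin n, ∑ k : Fin n, opT j (opS k g) p := by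
    rw [Dt_eq (Ds_smooth hg), Ds_eq hg]
    funext p
    apply Finset.sum_congr rfl
    intro j _
    exact congrFun (opT_sum j (fun k => Sop_smooth hg k)) p
  rw [e1, e2, Lap_eq hg]
  funext p
  beta_reduce
  rw [show (∑ j : Fin n, ∑ k : Fin n, opT j (opS k g) p)
      = ∑ j : Fin n, ∑ k : Fin n, opT k (opS j g) p from Finset.sum_comm,
    ← Finset.sum_sub_distrib]
  rw [Finset.mul_sum]
  apply Finset.sum_congr rfl
  intro j _
  rw [← Finset.sum_sub_distrib, Finset.sum_congr rfl (fun k _ => ST_comm hg j k p),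
    Finset.sum_ite_eq' univ j, if_pos (Finset.mem_univ j)]
  linear_combination (opL j g p) * Complex.I_sq

/-- The main induction, parametrized over `ε = ±1`. -/
theorem main_induction (X : (Vec n → ℂ) → (Vec n → ℂ)) {ε : ℂ} (hε : ε = 1 ∨ ε = -1)
    (hX : ∀ g : Vec n → ℂ, ContDiff ℝ (⊤ : ℕ∞) g → X g = XM ε g)
    (f : Vec n → ℂ) (hf : ContDiff ℝ (⊤ : ℕ∞) f)
    (hDs : Ds n f = fun _ => 0) (hDt : Dt n f = fun _ => 0) :
    ∀ ℓ : ℕ, ContDiff ℝ (⊤ : ℕ∞) (X^[ℓ] f)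
      ∧ (fun p => Dt n (X^[ℓ] f) p - ε * Complex.I * Ds n (X^[ℓ] f) p) = (fun _ => 0)
      ∧ Lap n (X^[ℓ] f) = (fun _ => 0) := by
  intro ℓ
  induction ℓ with
  | zero =>
    simp only [Function.iterate_zero_apply]
    refine ⟨hf, ?_, ?_⟩
    · funext p
      simp [congrFun hDs p, congrFun hDt p]
    · rw [Lap_comm hf, hDs, hDt, Ds_zero, Dt_zero]
      funext p; simp
  | succ m ih =>
    obtain ⟨hs, hA, hL⟩ := ih
    rw [Function.iterate_succ_apply', hX _ hs]
    have hsX : ContDiff ℝ (⊤ : ℕ∞) (XM ε (X^[m] f)) := XM_smooth ε hs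
    refine ⟨hsX, ?_, ?_⟩
    · rw [A_XM hs hε, hA, XM_zero]
    · rw [Lap_XM hs hε, hL, XM_zero]
      funext p
      simp [congrFun hA p]


theorem iterates_of_Xz_and_Xzdagger_on_h_monogenics_are_harmonic
    (n : ℕ) (hn : 1 ≤ n) (f : Vec n → ℂ) (hf : ContDiff ℝ (⊤ : ℕ∞) f)
    (hDs : Ds n f = fun _ => 0) (hDt : Dt n f = fun _ => 0) :
    ∀ ℓ : ℕ, Lap n ((XzOp n)^[ℓ] f) = (fun _ => 0) ∧
      Lap n ((XzdOp n)^[ℓ] f) = (fun _ => 0) := by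
  intro ℓ
  constructor
  · exact (main_induction (XzOp n) (Or.inl rfl) (fun g hg => Xz_eq' hg) f hf hDs hDt ℓ).2.2
  · exact (main_induction (XzdOp n) (Or.inr rfl) (fun g hg => Xzd_eq' hg) f hf hDs hDt ℓ).2.2
end
end

section
/- Let n ≥ 3 and let a, b, r be natural numbers with b ≤ r, and let H_{r−b} denote the (r−b)-th physicists' Hermite polynomial. On functions g : ℝ^n × ℝ^n × ℝ^n → ℂ define the raising operators R_j g = q_j g − ∂g/∂q_j and the operator T g = (x_{n−1} − i y_{n−1}) R_n g − (x_n − i y_n) R_{n−1} g. Define w(x,y,q) = (x_1 + i y_1)^a · T^b ( H_{r−b}(q_n) · exp(−(1/2) Σ_{j=1}^n q_j²) ). Then w is symplectic h-monogenic: D_s w = 0 and D_t w = 0 identically. -/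
open Complex Finset Matrix

noncomputable section

/-- The physicists' Hermite polynomials, via the recurrence
`H_0 = 1`, `H_1(t) = 2t`, `H_{k+2}(t) = 2t H_{k+1}(t) − 2(k+1) H_k(t)`. -/
noncomputable def hermiteP : ℕ → ℝ → ℝ
  | 0 => fun _ => 1
  | 1 => fun t => 2 * t
  | (k + 2) => fun t => 2 * t * hermiteP (k + 1) t - 2 * (k + 1) * hermiteP k t

/-- The raising operator `R_j g = q_j g − ∂g/∂q_j`. -/
noncomputable def Rop (n : ℕ) (j : Fin n) (g : Vec n → ℂ) : Vec n → ℂ :=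
  fun p => (p.2.2 j : ℂ) * g p - pdq n j g p

/-- `T g = (x_{n−1} − i y_{n−1}) R_n g − (x_n − i y_n) R_{n−1} g`, with `i1` playing the
role of the index `n−1` and `i2` the index `n`. -/
noncomputable def Tmap (n : ℕ) (i1 i2 : Fin n) (g : Vec n → ℂ) : Vec n → ℂ :=
  fun p => ((p.1 i1 : ℂ) - Complex.I * (p.2.1 i1 : ℂ)) * Rop n i2 g p -
    ((p.1 i2 : ℂ) - Complex.I * (p.2.1 i2 : ℂ)) * Rop n i1 g p

-- ### auxiliary development
namespace HWaux

lemma hermiteP_zero (t : ℝ) : hermiteP 0 t = 1 := rfl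

lemma hermiteP_succ (k : ℕ) (t : ℝ) :
    hermiteP (k+1) t = 2*t*hermiteP k t - 2*(k:ℝ)*hermiteP (k-1) t := by
  cases k with
  | zero => simp [hermiteP]
  | succ k => show hermiteP (k+2) t = _; rw [hermiteP]; push_cast; ring

lemma hermiteP_hasDerivAt (k : ℕ) (t : ℝ) :
    HasDerivAt (hermiteP k) (2*(k:ℝ)*hermiteP (k-1) t) t := by
  induction k using Nat.twoStepInduction generalizing t with
  | zero => simpa [hermiteP] using hasDerivAt_const t (1:ℝ)
  | one => simpa [hermiteP] using (hasDerivAt_id t).const_mul (2:ℝ)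
  | more k ih0 ih1 =>
    have ha := (((hasDerivAt_id t).const_mul (2:ℝ)).mul (ih1 t))
    have hb := (ih0 t).const_mul (2*((k:ℝ)+1))
    have h1 := ha.sub hb
    simp only [id_eq, Nat.add_sub_cancel] at h1 ⊢
    have hfun : hermiteP (k+2) = fun s => 2*s*hermiteP (k+1) s - 2*((k:ℝ)+1)*hermiteP k s := by
      funext s; rw [hermiteP]
    rw [hfun]
    refine h1.congr_deriv (Eq.symm ?_)
    have hr := hermiteP_succ k t
    push_cast
    linear_combination (2*(k:ℝ)+2) * hr

lemma hasDerivAt_affpow (c d K : ℂ) (e : ℕ) (t : ℝ) :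
    HasDerivAt (fun s : ℝ => (c + d * (s:ℂ))^e * K) (((e:ℂ) * (c + d*(t:ℂ))^(e-1) * d) * K) t := by
  have h0 : HasDerivAt (fun s:ℝ => (s:ℂ)) 1 t := by simpa using (hasDerivAt_id t).ofReal_comp
  have hin : HasDerivAt (fun s:ℝ => c + d * (s:ℂ)) d t := by simpa using (h0.const_mul d).const_add c
  exact ((hasDerivAt_pow e (c + d*(t:ℂ))).comp t hin).mul_const K

lemma hasDerivAt_cexp_quad (C : ℂ) (t : ℝ) :
    HasDerivAt (fun s : ℝ => Complex.exp (-(1/2 : ℂ) * ((s:ℂ)^2 + C)))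
      (-(t:ℂ) * Complex.exp (-(1/2 : ℂ) * ((t:ℂ)^2 + C))) t := by
  have h0 : HasDerivAt (fun s:ℝ => (s:ℂ)) 1 t := by simpa using (hasDerivAt_id t).ofReal_comp
  have h1 : HasDerivAt (fun s:ℝ => (s:ℂ)^2 + C) (2*(t:ℂ)) t := by
    have := ((hasDerivAt_pow 2 ((t:ℂ))).comp t h0).add_const C
    simpa using this
  have h2 := (h1.const_mul (-(1/2:ℂ))).cexp
  convert h2 using 1
  ring

lemma hasDerivAt_Hexp (k : ℕ) (K C : ℂ) (t : ℝ) :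
    HasDerivAt (fun s : ℝ => K * ((hermiteP k s : ℝ):ℂ) * Complex.exp (-(1/2 : ℂ) * ((s:ℂ)^2 + C)))
      (K * (((2*(k:ℝ)*hermiteP (k-1) t : ℝ):ℂ) - (t:ℂ) * ((hermiteP k t : ℝ):ℂ)) *
        Complex.exp (-(1/2 : ℂ)*((t:ℂ)^2 + C))) t := by
  have hH := (hermiteP_hasDerivAt k t).ofReal_comp
  have hE := hasDerivAt_cexp_quad C t
  have h := (hH.const_mul K).mul hE
  refine h.congr_deriv (Eq.symm ?_)
  push_cast
  ring

variable {n : ℕ}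

noncomputable def Efn (p : Vec n) : ℂ :=
  Complex.exp (-(1 / 2 : ℂ) * ((∑ j : Fin n, (p.2.2 j) ^ 2 : ℝ) : ℂ))

noncomputable def Gf (i0 i1 i2 : Fin n) (a m l k1 k2 : ℕ) (p : Vec n) : ℂ :=
  ((p.1 i0 : ℂ) + Complex.I * (p.2.1 i0 : ℂ)) ^ a *
  ((p.1 i1 : ℂ) - Complex.I * (p.2.1 i1 : ℂ)) ^ m *
  ((p.1 i2 : ℂ) - Complex.I * (p.2.1 i2 : ℂ)) ^ l *
  ((hermiteP k1 (p.2.2 i1) : ℝ) : ℂ) * ((hermiteP k2 (p.2.2 i2) : ℝ) : ℂ) * Efn p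

noncomputable def Cq (j : Fin n) (p : Vec n) : ℝ := ∑ i ∈ Finset.univ.erase j, (p.2.2 i) ^ 2

lemma sum_update_sq (q : Fin n → ℝ) (j : Fin n) (t : ℝ) :
    ∑ i, (Function.update q j t i)^2 = t^2 + ∑ i ∈ Finset.univ.erase j, (q i)^2 := by
  have h : ∀ i, (Function.update q j t i)^2 = Function.update (fun k => (q k)^2) j (t^2) i :=
    fun i => Function.apply_update (fun _ x => x^2) q j t i
  simp_rw [h]
  rw [Finset.sum_update_of_mem (Finset.mem_univ j), Finset.erase_eq]

lemma Efn_split (j : Fin n) (p : Vec n) :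
    Efn p = Complex.exp (-(1/2:ℂ) * (((p.2.2 j : ℝ):ℂ)^2 + ((Cq j p : ℝ):ℂ))) := by
  unfold Efn Cq
  congr 1
  have h := sum_update_sq p.2.2 j (p.2.2 j)
  rw [Function.update_eq_self] at h
  rw [h]
  push_cast
  ring



lemma Efn_x (p : Vec n) (x' : Fin n → ℝ) : Efn (x', p.2.1, p.2.2) = Efn p := rfl
lemma Efn_y (p : Vec n) (y' : Fin n → ℝ) : Efn (p.1, y', p.2.2) = Efn p := rfl

variable (i0 i1 i2 : Fin n) (a m l k1 k2 : ℕ)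

/-! ### composition lemmas -/

lemma compx_i0 (h01 : i0 ≠ i1) (h02 : i0 ≠ i2) (p : Vec n) :
    (fun t : ℝ => Gf i0 i1 i2 a m l k1 k2 (Function.update p.1 i0 t, p.2.1, p.2.2))
      = fun t : ℝ => ((Complex.I * (p.2.1 i0 : ℂ)) + 1 * (t:ℂ))^a * Gf i0 i1 i2 0 m l k1 k2 p := by
  funext t
  unfold Gf
  dsimp only
  rw [Function.update_self, Function.update_of_ne h01.symm, Function.update_of_ne h02.symm,
    Efn_x]
  ring

lemma compx_i1 (h01 : i0 ≠ i1) (h12 : i1 ≠ i2) (p : Vec n) :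
    (fun t : ℝ => Gf i0 i1 i2 a m l k1 k2 (Function.update p.1 i1 t, p.2.1, p.2.2))
      = fun t : ℝ => ((-(Complex.I * (p.2.1 i1 : ℂ))) + 1 * (t:ℂ))^m * Gf i0 i1 i2 a 0 l k1 k2 p := by
  funext t
  unfold Gf
  dsimp only
  rw [Function.update_self, Function.update_of_ne h01, Function.update_of_ne h12.symm, Efn_x]
  ring

lemma compx_i2 (h02 : i0 ≠ i2) (h12 : i1 ≠ i2) (p : Vec n) :
    (fun t : ℝ => Gf i0 i1 i2 a m l k1 k2 (Function.update p.1 i2 t, p.2.1, p.2.2))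
      = fun t : ℝ => ((-(Complex.I * (p.2.1 i2 : ℂ))) + 1 * (t:ℂ))^l * Gf i0 i1 i2 a m 0 k1 k2 p := by
  funext t
  unfold Gf
  dsimp only
  rw [Function.update_self, Function.update_of_ne h02, Function.update_of_ne h12, Efn_x]
  ring

lemma compx_other {j : Fin n} (hj0 : j ≠ i0) (hj1 : j ≠ i1) (hj2 : j ≠ i2) (p : Vec n) :
    (fun t : ℝ => Gf i0 i1 i2 a m l k1 k2 (Function.update p.1 j t, p.2.1, p.2.2))
      = fun _ => Gf i0 i1 i2 a m l k1 k2 p := by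
  funext t
  unfold Gf
  dsimp only
  rw [Function.update_of_ne hj0.symm, Function.update_of_ne hj1.symm,
    Function.update_of_ne hj2.symm, Efn_x]

lemma compy_i0 (h01 : i0 ≠ i1) (h02 : i0 ≠ i2) (p : Vec n) :
    (fun t : ℝ => Gf i0 i1 i2 a m l k1 k2 (p.1, Function.update p.2.1 i0 t, p.2.2))
      = fun t : ℝ => (((p.1 i0 : ℂ)) + Complex.I * (t:ℂ))^a * Gf i0 i1 i2 0 m l k1 k2 p := by
  funext t
  unfold Gf
  dsimp only
  rw [Function.update_self, Function.update_of_ne h01.symm, Function.update_of_ne h02.symm,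
    Efn_y]
  ring

lemma compy_i1 (h01 : i0 ≠ i1) (h12 : i1 ≠ i2) (p : Vec n) :
    (fun t : ℝ => Gf i0 i1 i2 a m l k1 k2 (p.1, Function.update p.2.1 i1 t, p.2.2))
      = fun t : ℝ => (((p.1 i1 : ℂ)) + (-Complex.I) * (t:ℂ))^m * Gf i0 i1 i2 a 0 l k1 k2 p := by
  funext t
  unfold Gf
  dsimp only
  rw [Function.update_self, Function.update_of_ne h01, Function.update_of_ne h12.symm, Efn_y]
  ring

lemma compy_i2 (h02 : i0 ≠ i2) (h12 : i1 ≠ i2) (p : Vec n) :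
    (fun t : ℝ => Gf i0 i1 i2 a m l k1 k2 (p.1, Function.update p.2.1 i2 t, p.2.2))
      = fun t : ℝ => (((p.1 i2 : ℂ)) + (-Complex.I) * (t:ℂ))^l * Gf i0 i1 i2 a m 0 k1 k2 p := by
  funext t
  unfold Gf
  dsimp only
  rw [Function.update_self, Function.update_of_ne h02, Function.update_of_ne h12, Efn_y]
  ring

lemma compy_other {j : Fin n} (hj0 : j ≠ i0) (hj1 : j ≠ i1) (hj2 : j ≠ i2) (p : Vec n) :
    (fun t : ℝ => Gf i0 i1 i2 a m l k1 k2 (p.1, Function.update p.2.1 j t, p.2.2))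
      = fun _ => Gf i0 i1 i2 a m l k1 k2 p := by
  funext t
  unfold Gf
  dsimp only
  rw [Function.update_of_ne hj0.symm, Function.update_of_ne hj1.symm,
    Function.update_of_ne hj2.symm, Efn_y]

lemma compq_i1 (h12 : i1 ≠ i2) (p : Vec n) :
    (fun t : ℝ => Gf i0 i1 i2 a m l k1 k2 (p.1, p.2.1, Function.update p.2.2 i1 t))
      = fun t : ℝ => (((p.1 i0 : ℂ) + Complex.I * (p.2.1 i0 : ℂ)) ^ a *
          ((p.1 i1 : ℂ) - Complex.I * (p.2.1 i1 : ℂ)) ^ m *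
          ((p.1 i2 : ℂ) - Complex.I * (p.2.1 i2 : ℂ)) ^ l *
          ((hermiteP k2 (p.2.2 i2) : ℝ) : ℂ)) * ((hermiteP k1 t : ℝ):ℂ) *
          Complex.exp (-(1/2:ℂ) * ((t:ℂ)^2 + ((Cq i1 p : ℝ):ℂ))) := by
  funext t
  unfold Gf Efn Cq
  dsimp only
  rw [Function.update_self, Function.update_of_ne h12.symm, sum_update_sq]
  push_cast
  ring

lemma compq_i2 (h12 : i1 ≠ i2) (p : Vec n) :
    (fun t : ℝ => Gf i0 i1 i2 a m l k1 k2 (p.1, p.2.1, Function.update p.2.2 i2 t))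
      = fun t : ℝ => (((p.1 i0 : ℂ) + Complex.I * (p.2.1 i0 : ℂ)) ^ a *
          ((p.1 i1 : ℂ) - Complex.I * (p.2.1 i1 : ℂ)) ^ m *
          ((p.1 i2 : ℂ) - Complex.I * (p.2.1 i2 : ℂ)) ^ l *
          ((hermiteP k1 (p.2.2 i1) : ℝ) : ℂ)) * ((hermiteP k2 t : ℝ):ℂ) *
          Complex.exp (-(1/2:ℂ) * ((t:ℂ)^2 + ((Cq i2 p : ℝ):ℂ))) := by
  funext t
  unfold Gf Efn Cq
  dsimp only
  rw [Function.update_self, Function.update_of_ne h12, sum_update_sq]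
  push_cast
  ring

lemma compq_other {j : Fin n} (hj1 : j ≠ i1) (hj2 : j ≠ i2) (p : Vec n) :
    (fun t : ℝ => Gf i0 i1 i2 a m l k1 k2 (p.1, p.2.1, Function.update p.2.2 j t))
      = fun t : ℝ => (((p.1 i0 : ℂ) + Complex.I * (p.2.1 i0 : ℂ)) ^ a *
          ((p.1 i1 : ℂ) - Complex.I * (p.2.1 i1 : ℂ)) ^ m *
          ((p.1 i2 : ℂ) - Complex.I * (p.2.1 i2 : ℂ)) ^ l *
          ((hermiteP k1 (p.2.2 i1) : ℝ) : ℂ) * ((hermiteP k2 (p.2.2 i2) : ℝ) : ℂ)) *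
          ((hermiteP 0 t : ℝ):ℂ) *
          Complex.exp (-(1/2:ℂ) * ((t:ℂ)^2 + ((Cq j p : ℝ):ℂ))) := by
  funext t
  unfold Gf Efn Cq
  dsimp only
  rw [Function.update_of_ne hj1.symm, Function.update_of_ne hj2.symm, sum_update_sq,
    hermiteP_zero]
  push_cast
  ring


/-! ### first-order derivative formulas -/

lemma pdx_G_i0 (h01 : i0 ≠ i1) (h02 : i0 ≠ i2) :
    pdx n i0 (Gf i0 i1 i2 a m l k1 k2) = fun p => (a:ℂ) * Gf i0 i1 i2 (a-1) m l k1 k2 p := by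
  funext p
  unfold pdx
  rw [compx_i0 i0 i1 i2 a m l k1 k2 h01 h02 p,
    (hasDerivAt_affpow (Complex.I * (p.2.1 i0 : ℂ)) 1 (Gf i0 i1 i2 0 m l k1 k2 p) a (p.1 i0)).deriv]
  unfold Gf
  ring

lemma pdx_G_i1 (h01 : i0 ≠ i1) (h12 : i1 ≠ i2) :
    pdx n i1 (Gf i0 i1 i2 a m l k1 k2) = fun p => (m:ℂ) * Gf i0 i1 i2 a (m-1) l k1 k2 p := by
  funext p
  unfold pdx
  rw [compx_i1 i0 i1 i2 a m l k1 k2 h01 h12 p,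
    (hasDerivAt_affpow (-(Complex.I * (p.2.1 i1 : ℂ))) 1 (Gf i0 i1 i2 a 0 l k1 k2 p) m (p.1 i1)).deriv]
  unfold Gf
  ring

lemma pdx_G_i2 (h02 : i0 ≠ i2) (h12 : i1 ≠ i2) :
    pdx n i2 (Gf i0 i1 i2 a m l k1 k2) = fun p => (l:ℂ) * Gf i0 i1 i2 a m (l-1) k1 k2 p := by
  funext p
  unfold pdx
  rw [compx_i2 i0 i1 i2 a m l k1 k2 h02 h12 p,
    (hasDerivAt_affpow (-(Complex.I * (p.2.1 i2 : ℂ))) 1 (Gf i0 i1 i2 a m 0 k1 k2 p) l (p.1 i2)).deriv]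
  unfold Gf
  ring

lemma pdx_G_other {j : Fin n} (hj0 : j ≠ i0) (hj1 : j ≠ i1) (hj2 : j ≠ i2) :
    pdx n j (Gf i0 i1 i2 a m l k1 k2) = fun _ => (0:ℂ) := by
  funext p
  unfold pdx
  rw [compx_other i0 i1 i2 a m l k1 k2 hj0 hj1 hj2 p, deriv_const]

lemma pdy_G_i0 (h01 : i0 ≠ i1) (h02 : i0 ≠ i2) :
    pdy n i0 (Gf i0 i1 i2 a m l k1 k2) = fun p =>
      Complex.I * (a:ℂ) * Gf i0 i1 i2 (a-1) m l k1 k2 p := by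
  funext p
  unfold pdy
  rw [compy_i0 i0 i1 i2 a m l k1 k2 h01 h02 p,
    (hasDerivAt_affpow ((p.1 i0 : ℂ)) Complex.I (Gf i0 i1 i2 0 m l k1 k2 p) a (p.2.1 i0)).deriv]
  unfold Gf
  ring

lemma pdy_G_i1 (h01 : i0 ≠ i1) (h12 : i1 ≠ i2) :
    pdy n i1 (Gf i0 i1 i2 a m l k1 k2) = fun p =>
      -(Complex.I) * (m:ℂ) * Gf i0 i1 i2 a (m-1) l k1 k2 p := by
  funext p
  unfold pdy
  rw [compy_i1 i0 i1 i2 a m l k1 k2 h01 h12 p,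
    (hasDerivAt_affpow ((p.1 i1 : ℂ)) (-Complex.I) (Gf i0 i1 i2 a 0 l k1 k2 p) m (p.2.1 i1)).deriv]
  unfold Gf
  ring

lemma pdy_G_i2 (h02 : i0 ≠ i2) (h12 : i1 ≠ i2) :
    pdy n i2 (Gf i0 i1 i2 a m l k1 k2) = fun p =>
      -(Complex.I) * (l:ℂ) * Gf i0 i1 i2 a m (l-1) k1 k2 p := by
  funext p
  unfold pdy
  rw [compy_i2 i0 i1 i2 a m l k1 k2 h02 h12 p,
    (hasDerivAt_affpow ((p.1 i2 : ℂ)) (-Complex.I) (Gf i0 i1 i2 a m 0 k1 k2 p) l (p.2.1 i2)).deriv]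
  unfold Gf
  ring

lemma pdy_G_other {j : Fin n} (hj0 : j ≠ i0) (hj1 : j ≠ i1) (hj2 : j ≠ i2) :
    pdy n j (Gf i0 i1 i2 a m l k1 k2) = fun _ => (0:ℂ) := by
  funext p
  unfold pdy
  rw [compy_other i0 i1 i2 a m l k1 k2 hj0 hj1 hj2 p, deriv_const]

lemma pdq_G_i1 (h12 : i1 ≠ i2) :
    pdq n i1 (Gf i0 i1 i2 a m l k1 k2) = fun p =>
      2*(k1:ℂ) * Gf i0 i1 i2 a m l (k1-1) k2 p -
        ((p.2.2 i1 : ℝ):ℂ) * Gf i0 i1 i2 a m l k1 k2 p := by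
  funext p
  unfold pdq
  rw [compq_i1 i0 i1 i2 a m l k1 k2 h12 p,
    (hasDerivAt_Hexp k1 (((p.1 i0 : ℂ) + Complex.I * (p.2.1 i0 : ℂ)) ^ a *
      ((p.1 i1 : ℂ) - Complex.I * (p.2.1 i1 : ℂ)) ^ m *
      ((p.1 i2 : ℂ) - Complex.I * (p.2.1 i2 : ℂ)) ^ l *
      ((hermiteP k2 (p.2.2 i2) : ℝ) : ℂ)) ((Cq i1 p : ℝ):ℂ) (p.2.2 i1)).deriv]
  simp only [Gf, Efn_split i1]
  push_cast
  ring

lemma pdq_G_i2 (h12 : i1 ≠ i2) :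
    pdq n i2 (Gf i0 i1 i2 a m l k1 k2) = fun p =>
      2*(k2:ℂ) * Gf i0 i1 i2 a m l k1 (k2-1) p -
        ((p.2.2 i2 : ℝ):ℂ) * Gf i0 i1 i2 a m l k1 k2 p := by
  funext p
  unfold pdq
  rw [compq_i2 i0 i1 i2 a m l k1 k2 h12 p,
    (hasDerivAt_Hexp k2 (((p.1 i0 : ℂ) + Complex.I * (p.2.1 i0 : ℂ)) ^ a *
      ((p.1 i1 : ℂ) - Complex.I * (p.2.1 i1 : ℂ)) ^ m *
      ((p.1 i2 : ℂ) - Complex.I * (p.2.1 i2 : ℂ)) ^ l *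
      ((hermiteP k1 (p.2.2 i1) : ℝ) : ℂ)) ((Cq i2 p : ℝ):ℂ) (p.2.2 i2)).deriv]
  simp only [Gf, Efn_split i2]
  push_cast
  ring

lemma pdq_G_other {j : Fin n} (hj1 : j ≠ i1) (hj2 : j ≠ i2) :
    pdq n j (Gf i0 i1 i2 a m l k1 k2) = fun p =>
      -((p.2.2 j : ℝ):ℂ) * Gf i0 i1 i2 a m l k1 k2 p := by
  funext p
  unfold pdq
  rw [compq_other i0 i1 i2 a m l k1 k2 hj1 hj2 p,
    (hasDerivAt_Hexp 0 (((p.1 i0 : ℂ) + Complex.I * (p.2.1 i0 : ℂ)) ^ a *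
      ((p.1 i1 : ℂ) - Complex.I * (p.2.1 i1 : ℂ)) ^ m *
      ((p.1 i2 : ℂ) - Complex.I * (p.2.1 i2 : ℂ)) ^ l *
      ((hermiteP k1 (p.2.2 i1) : ℝ) : ℂ) * ((hermiteP k2 (p.2.2 i2) : ℝ) : ℂ)) ((Cq j p : ℝ):ℂ)
      (p.2.2 j)).deriv]
  simp only [Gf, Efn_split j, hermiteP_zero]
  push_cast
  ring

/-! ### differentiability of slot compositions -/

lemma diffx_G (h01 : i0 ≠ i1) (h02 : i0 ≠ i2) (h12 : i1 ≠ i2) (j : Fin n) (p : Vec n) (t : ℝ) :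
    DifferentiableAt ℝ
      (fun s => Gf i0 i1 i2 a m l k1 k2 (Function.update p.1 j s, p.2.1, p.2.2)) t := by
  by_cases hj0 : j = i0
  · rw [hj0,compx_i0 i0 i1 i2 a m l k1 k2 h01 h02 p]
    exact (hasDerivAt_affpow _ _ _ a t).differentiableAt
  by_cases hj1 : j = i1
  · rw [hj1,compx_i1 i0 i1 i2 a m l k1 k2 h01 h12 p]
    exact (hasDerivAt_affpow _ _ _ m t).differentiableAt
  by_cases hj2 : j = i2
  · rw [hj2,compx_i2 i0 i1 i2 a m l k1 k2 h02 h12 p]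
    exact (hasDerivAt_affpow _ _ _ l t).differentiableAt
  · rw [compx_other i0 i1 i2 a m l k1 k2 hj0 hj1 hj2 p]
    exact differentiableAt_const _

lemma diffy_G (h01 : i0 ≠ i1) (h02 : i0 ≠ i2) (h12 : i1 ≠ i2) (j : Fin n) (p : Vec n) (t : ℝ) :
    DifferentiableAt ℝ
      (fun s => Gf i0 i1 i2 a m l k1 k2 (p.1, Function.update p.2.1 j s, p.2.2)) t := by
  by_cases hj0 : j = i0
  · rw [hj0,compy_i0 i0 i1 i2 a m l k1 k2 h01 h02 p]
    exact (hasDerivAt_affpow _ _ _ a t).differentiableAt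
  by_cases hj1 : j = i1
  · rw [hj1,compy_i1 i0 i1 i2 a m l k1 k2 h01 h12 p]
    exact (hasDerivAt_affpow _ _ _ m t).differentiableAt
  by_cases hj2 : j = i2
  · rw [hj2,compy_i2 i0 i1 i2 a m l k1 k2 h02 h12 p]
    exact (hasDerivAt_affpow _ _ _ l t).differentiableAt
  · rw [compy_other i0 i1 i2 a m l k1 k2 hj0 hj1 hj2 p]
    exact differentiableAt_const _

lemma diffq_G (h12 : i1 ≠ i2) (j : Fin n) (p : Vec n) (t : ℝ) :
    DifferentiableAt ℝ
      (fun s => Gf i0 i1 i2 a m l k1 k2 (p.1, p.2.1, Function.update p.2.2 j s)) t := by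
  by_cases hj1 : j = i1
  · rw [hj1,compq_i1 i0 i1 i2 a m l k1 k2 h12 p]
    exact (hasDerivAt_Hexp k1 _ _ t).differentiableAt
  by_cases hj2 : j = i2
  · rw [hj2,compq_i2 i0 i1 i2 a m l k1 k2 h12 p]
    exact (hasDerivAt_Hexp k2 _ _ t).differentiableAt
  · rw [compq_other i0 i1 i2 a m l k1 k2 hj1 hj2 p]
    exact (hasDerivAt_Hexp 0 _ _ t).differentiableAt


/-! ### linear-combination machinery -/

abbrev Pms := ℕ × ℕ × ℕ × ℕ × ℕ

noncomputable def GP (i0 i1 i2 : Fin n) (P : Pms) : Vec n → ℂ :=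
  Gf i0 i1 i2 P.1 P.2.1 P.2.2.1 P.2.2.2.1 P.2.2.2.2

noncomputable def clF (i0 i1 i2 : Fin n) : List (ℂ × Pms) → Vec n → ℂ
  | [] => fun _ => 0
  | cp :: L => fun p => cp.1 * GP i0 i1 i2 cp.2 p + clF i0 i1 i2 L p

lemma clF_append (L1 L2 : List (ℂ × Pms)) :
    clF i0 i1 i2 (L1 ++ L2) = fun p => clF i0 i1 i2 L1 p + clF i0 i1 i2 L2 p := by
  induction L1 with
  | nil => funext p; simp [clF]
  | cons cp L ih => funext p; simp [clF, ih]; ring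

/-- coefficient/parameter action of `∂/∂x_j` on a basis term -/
def xsh (i0 i1 i2 j : Fin n) : ℂ × Pms → ℂ × Pms
  | (c, (a, m, l, k1, k2)) =>
    if j = i0 then (c * a, (a-1, m, l, k1, k2))
    else if j = i1 then (c * m, (a, m-1, l, k1, k2))
    else if j = i2 then (c * l, (a, m, l-1, k1, k2))
    else (0, (a, m, l, k1, k2))

/-- coefficient/parameter action of `∂/∂y_j` on a basis term -/
def ysh (i0 i1 i2 j : Fin n) : ℂ × Pms → ℂ × Pms
  | (c, (a, m, l, k1, k2)) =>
    if j = i0 then (c * (Complex.I * a), (a-1, m, l, k1, k2))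
    else if j = i1 then (c * (-Complex.I * m), (a, m-1, l, k1, k2))
    else if j = i2 then (c * (-Complex.I * l), (a, m, l-1, k1, k2))
    else (0, (a, m, l, k1, k2))

/-- the "lowering part" of `∂/∂q_j` on a basis term -/
def qsh (i1 i2 j : Fin n) : ℂ × Pms → ℂ × Pms
  | (c, (a, m, l, k1, k2)) =>
    if j = i1 then (c * (2*k1), (a, m, l, k1-1, k2))
    else if j = i2 then (c * (2*k2), (a, m, l, k1, k2-1))
    else (0, (a, m, l, k1, k2))

lemma pdx_cmul (j : Fin n) (c : ℂ) (f : Vec n → ℂ) :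
    pdx n j (fun p => c * f p) = fun p => c * pdx n j f p := by
  funext p; unfold pdx; exact deriv_const_mul_field c

lemma pdy_cmul (j : Fin n) (c : ℂ) (f : Vec n → ℂ) :
    pdy n j (fun p => c * f p) = fun p => c * pdy n j f p := by
  funext p; unfold pdy; exact deriv_const_mul_field c

lemma pdq_cmul (j : Fin n) (c : ℂ) (f : Vec n → ℂ) :
    pdq n j (fun p => c * f p) = fun p => c * pdq n j f p := by
  funext p; unfold pdq; exact deriv_const_mul_field c

lemma pdx_GP (h01 : i0 ≠ i1) (h02 : i0 ≠ i2) (h12 : i1 ≠ i2) (j : Fin n) (P : Pms) :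
    pdx n j (GP i0 i1 i2 P) =
      fun p => (xsh i0 i1 i2 j (1, P)).1 * GP i0 i1 i2 (xsh i0 i1 i2 j (1, P)).2 p := by
  obtain ⟨a, m, l, k1, k2⟩ := P
  by_cases hj0 : j = i0
  · rw [hj0]; simp only [GP, xsh, if_pos rfl]
    rw [pdx_G_i0 i0 i1 i2 a m l k1 k2 h01 h02]
    funext p; push_cast; ring
  by_cases hj1 : j = i1
  · rw [hj1]; simp only [GP, xsh, if_neg (hj1 ▸ hj0), if_pos rfl]
    rw [pdx_G_i1 i0 i1 i2 a m l k1 k2 h01 h12]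
    funext p; push_cast; ring
  by_cases hj2 : j = i2
  · rw [hj2]; simp only [GP, xsh, if_neg (hj2 ▸ hj0), if_neg (hj2 ▸ hj1), if_pos rfl]
    rw [pdx_G_i2 i0 i1 i2 a m l k1 k2 h02 h12]
    funext p; push_cast; ring
  · simp only [GP, xsh, if_neg hj0, if_neg hj1, if_neg hj2]
    rw [pdx_G_other i0 i1 i2 a m l k1 k2 hj0 hj1 hj2]
    funext p; simp

lemma pdy_GP (h01 : i0 ≠ i1) (h02 : i0 ≠ i2) (h12 : i1 ≠ i2) (j : Fin n) (P : Pms) :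
    pdy n j (GP i0 i1 i2 P) =
      fun p => (ysh i0 i1 i2 j (1, P)).1 * GP i0 i1 i2 (ysh i0 i1 i2 j (1, P)).2 p := by
  obtain ⟨a, m, l, k1, k2⟩ := P
  by_cases hj0 : j = i0
  · rw [hj0]; simp only [GP, ysh, if_pos rfl]
    rw [pdy_G_i0 i0 i1 i2 a m l k1 k2 h01 h02]
    funext p; push_cast; ring
  by_cases hj1 : j = i1
  · rw [hj1]; simp only [GP, ysh, if_neg (hj1 ▸ hj0), if_pos rfl]
    rw [pdy_G_i1 i0 i1 i2 a m l k1 k2 h01 h12]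
    funext p; push_cast; ring
  by_cases hj2 : j = i2
  · rw [hj2]; simp only [GP, ysh, if_neg (hj2 ▸ hj0), if_neg (hj2 ▸ hj1), if_pos rfl]
    rw [pdy_G_i2 i0 i1 i2 a m l k1 k2 h02 h12]
    funext p; push_cast; ring
  · simp only [GP, ysh, if_neg hj0, if_neg hj1, if_neg hj2]
    rw [pdy_G_other i0 i1 i2 a m l k1 k2 hj0 hj1 hj2]
    funext p; simp

lemma pdq_GP (h12 : i1 ≠ i2) (j : Fin n) (P : Pms) :
    pdq n j (GP i0 i1 i2 P) =
      fun p => (qsh i1 i2 j (1, P)).1 * GP i0 i1 i2 (qsh i1 i2 j (1, P)).2 p -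
        ((p.2.2 j : ℝ):ℂ) * GP i0 i1 i2 P p := by
  obtain ⟨a, m, l, k1, k2⟩ := P
  by_cases hj1 : j = i1
  · rw [hj1]; simp only [GP, qsh, if_pos rfl]
    rw [pdq_G_i1 i0 i1 i2 a m l k1 k2 h12]
    funext p; push_cast; ring
  by_cases hj2 : j = i2
  · rw [hj2]; simp only [GP, qsh, if_neg (hj2 ▸ hj1), if_pos rfl]
    rw [pdq_G_i2 i0 i1 i2 a m l k1 k2 h12]
    funext p; push_cast; ring
  · simp only [GP, qsh, if_neg hj1, if_neg hj2]
    rw [pdq_G_other i0 i1 i2 a m l k1 k2 hj1 hj2]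
    funext p; simp


/-! ### differentiability for GP and clF -/

lemma diffx_GP (h01 : i0 ≠ i1) (h02 : i0 ≠ i2) (h12 : i1 ≠ i2) (P : Pms) (j : Fin n)
    (p : Vec n) (t : ℝ) :
    DifferentiableAt ℝ (fun s => GP i0 i1 i2 P (Function.update p.1 j s, p.2.1, p.2.2)) t := by
  obtain ⟨a, m, l, k1, k2⟩ := P
  exact diffx_G i0 i1 i2 a m l k1 k2 h01 h02 h12 j p t

lemma diffy_GP (h01 : i0 ≠ i1) (h02 : i0 ≠ i2) (h12 : i1 ≠ i2) (P : Pms) (j : Fin n)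
    (p : Vec n) (t : ℝ) :
    DifferentiableAt ℝ (fun s => GP i0 i1 i2 P (p.1, Function.update p.2.1 j s, p.2.2)) t := by
  obtain ⟨a, m, l, k1, k2⟩ := P
  exact diffy_G i0 i1 i2 a m l k1 k2 h01 h02 h12 j p t

lemma diffq_GP (h12 : i1 ≠ i2) (P : Pms) (j : Fin n) (p : Vec n) (t : ℝ) :
    DifferentiableAt ℝ (fun s => GP i0 i1 i2 P (p.1, p.2.1, Function.update p.2.2 j s)) t := by
  obtain ⟨a, m, l, k1, k2⟩ := P
  exact diffq_G i0 i1 i2 a m l k1 k2 h12 j p t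

lemma diffx_clF (h01 : i0 ≠ i1) (h02 : i0 ≠ i2) (h12 : i1 ≠ i2) (L : List (ℂ × Pms)) (j : Fin n)
    (p : Vec n) (t : ℝ) :
    DifferentiableAt ℝ (fun s => clF i0 i1 i2 L (Function.update p.1 j s, p.2.1, p.2.2)) t := by
  induction L with
  | nil => exact differentiableAt_const 0
  | cons cp L ih =>
    exact (((diffx_GP i0 i1 i2 h01 h02 h12 cp.2 j p t).const_mul cp.1).add ih :)

lemma diffy_clF (h01 : i0 ≠ i1) (h02 : i0 ≠ i2) (h12 : i1 ≠ i2) (L : List (ℂ × Pms)) (j : Fin n)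
    (p : Vec n) (t : ℝ) :
    DifferentiableAt ℝ (fun s => clF i0 i1 i2 L (p.1, Function.update p.2.1 j s, p.2.2)) t := by
  induction L with
  | nil => exact differentiableAt_const 0
  | cons cp L ih =>
    exact (((diffy_GP i0 i1 i2 h01 h02 h12 cp.2 j p t).const_mul cp.1).add ih :)

lemma diffq_clF (h12 : i1 ≠ i2) (L : List (ℂ × Pms)) (j : Fin n) (p : Vec n) (t : ℝ) :
    DifferentiableAt ℝ (fun s => clF i0 i1 i2 L (p.1, p.2.1, Function.update p.2.2 j s)) t := by
  induction L with
  | nil => exact differentiableAt_const 0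
  | cons cp L ih =>
    exact (((diffq_GP i0 i1 i2 h12 cp.2 j p t).const_mul cp.1).add ih :)

/-! ### cons rules -/

lemma pdx_cons (h01 : i0 ≠ i1) (h02 : i0 ≠ i2) (h12 : i1 ≠ i2) (j : Fin n) (cp : ℂ × Pms)
    (L : List (ℂ × Pms)) :
    pdx n j (clF i0 i1 i2 (cp :: L)) =
      fun p => cp.1 * pdx n j (GP i0 i1 i2 cp.2) p + pdx n j (clF i0 i1 i2 L) p := by
  funext p
  unfold pdx
  simp only [clF]
  rw [deriv_fun_add ((diffx_GP i0 i1 i2 h01 h02 h12 cp.2 j p _).const_mul cp.1)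
    (diffx_clF i0 i1 i2 h01 h02 h12 L j p _), deriv_const_mul_field]

lemma pdy_cons (h01 : i0 ≠ i1) (h02 : i0 ≠ i2) (h12 : i1 ≠ i2) (j : Fin n) (cp : ℂ × Pms)
    (L : List (ℂ × Pms)) :
    pdy n j (clF i0 i1 i2 (cp :: L)) =
      fun p => cp.1 * pdy n j (GP i0 i1 i2 cp.2) p + pdy n j (clF i0 i1 i2 L) p := by
  funext p
  unfold pdy
  simp only [clF]
  rw [deriv_fun_add ((diffy_GP i0 i1 i2 h01 h02 h12 cp.2 j p _).const_mul cp.1)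
    (diffy_clF i0 i1 i2 h01 h02 h12 L j p _), deriv_const_mul_field]

lemma pdq_cons (h12 : i1 ≠ i2) (j : Fin n) (cp : ℂ × Pms) (L : List (ℂ × Pms)) :
    pdq n j (clF i0 i1 i2 (cp :: L)) =
      fun p => cp.1 * pdq n j (GP i0 i1 i2 cp.2) p + pdq n j (clF i0 i1 i2 L) p := by
  funext p
  unfold pdq
  simp only [clF]
  rw [deriv_fun_add ((diffq_GP i0 i1 i2 h12 cp.2 j p _).const_mul cp.1)
    (diffq_clF i0 i1 i2 h12 L j p _), deriv_const_mul_field]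

/-! ### coefficient compatibility -/

lemma xsh_coef (j : Fin n) (c : ℂ) (P : Pms) :
    xsh i0 i1 i2 j (c, P) = (c * (xsh i0 i1 i2 j (1, P)).1, (xsh i0 i1 i2 j (1, P)).2) := by
  obtain ⟨a, m, l, k1, k2⟩ := P
  unfold xsh
  split_ifs <;> simp

lemma ysh_coef (j : Fin n) (c : ℂ) (P : Pms) :
    ysh i0 i1 i2 j (c, P) = (c * (ysh i0 i1 i2 j (1, P)).1, (ysh i0 i1 i2 j (1, P)).2) := by
  obtain ⟨a, m, l, k1, k2⟩ := P
  unfold ysh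
  split_ifs <;> simp

lemma qsh_coef (j : Fin n) (c : ℂ) (P : Pms) :
    qsh i1 i2 j (c, P) = (c * (qsh i1 i2 j (1, P)).1, (qsh i1 i2 j (1, P)).2) := by
  obtain ⟨a, m, l, k1, k2⟩ := P
  unfold qsh
  split_ifs <;> simp

/-! ### list-level closed forms -/

lemma pdx_clF (h01 : i0 ≠ i1) (h02 : i0 ≠ i2) (h12 : i1 ≠ i2) (j : Fin n) (L : List (ℂ × Pms)) :
    pdx n j (clF i0 i1 i2 L) = clF i0 i1 i2 (L.map (xsh i0 i1 i2 j)) := by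
  induction L with
  | nil =>
    funext p; unfold pdx; simp only [clF, List.map_nil]
    exact deriv_const _ _
  | cons cp L ih =>
    rw [pdx_cons i0 i1 i2 h01 h02 h12 j cp L, pdx_GP i0 i1 i2 h01 h02 h12 j cp.2, ih]
    funext p
    simp only [List.map_cons, clF]
    rw [show (xsh i0 i1 i2 j cp) = (cp.1 * (xsh i0 i1 i2 j (1, cp.2)).1,
      (xsh i0 i1 i2 j (1, cp.2)).2) from xsh_coef i0 i1 i2 j cp.1 cp.2]
    ring

lemma pdy_clF (h01 : i0 ≠ i1) (h02 : i0 ≠ i2) (h12 : i1 ≠ i2) (j : Fin n) (L : List (ℂ × Pms)) :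
    pdy n j (clF i0 i1 i2 L) = clF i0 i1 i2 (L.map (ysh i0 i1 i2 j)) := by
  induction L with
  | nil =>
    funext p; unfold pdy; simp only [clF, List.map_nil]
    exact deriv_const _ _
  | cons cp L ih =>
    rw [pdy_cons i0 i1 i2 h01 h02 h12 j cp L, pdy_GP i0 i1 i2 h01 h02 h12 j cp.2, ih]
    funext p
    simp only [List.map_cons, clF]
    rw [show (ysh i0 i1 i2 j cp) = (cp.1 * (ysh i0 i1 i2 j (1, cp.2)).1,
      (ysh i0 i1 i2 j (1, cp.2)).2) from ysh_coef i0 i1 i2 j cp.1 cp.2]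
    ring

lemma pdq_clF (h12 : i1 ≠ i2) (j : Fin n) (L : List (ℂ × Pms)) :
    pdq n j (clF i0 i1 i2 L) = fun p =>
      clF i0 i1 i2 (L.map (qsh i1 i2 j)) p - ((p.2.2 j : ℝ):ℂ) * clF i0 i1 i2 L p := by
  induction L with
  | nil =>
    funext p; unfold pdq; simp only [clF, List.map_nil]
    rw [deriv_const]
    simp
  | cons cp L ih =>
    rw [pdq_cons i0 i1 i2 h12 j cp L, pdq_GP i0 i1 i2 h12 j cp.2, ih]
    funext p
    simp only [List.map_cons, clF]
    rw [show (qsh i1 i2 j cp) = (cp.1 * (qsh i1 i2 j (1, cp.2)).1,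
      (qsh i1 i2 j (1, cp.2)).2) from qsh_coef i1 i2 j cp.1 cp.2]
    ring


/-! ### hermite recurrences at the Gf level -/

lemma Gf_qrec1 : Gf i0 i1 i2 a m l (k1+1) k2 = fun p =>
    2*((p.2.2 i1 : ℝ):ℂ) * Gf i0 i1 i2 a m l k1 k2 p -
      2*(k1:ℂ) * Gf i0 i1 i2 a m l (k1-1) k2 p := by
  funext p
  unfold Gf
  have h := hermiteP_succ k1 (p.2.2 i1)
  have hc : ((hermiteP (k1+1) (p.2.2 i1) : ℝ):ℂ) =
      2*((p.2.2 i1 : ℝ):ℂ)*((hermiteP k1 (p.2.2 i1) : ℝ):ℂ) -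
        2*(k1:ℂ)*((hermiteP (k1-1) (p.2.2 i1) : ℝ):ℂ) := by
    exact_mod_cast congrArg Complex.ofReal h
  rw [hc]
  ring

lemma Gf_qrec2 : Gf i0 i1 i2 a m l k1 (k2+1) = fun p =>
    2*((p.2.2 i2 : ℝ):ℂ) * Gf i0 i1 i2 a m l k1 k2 p -
      2*(k2:ℂ) * Gf i0 i1 i2 a m l k1 (k2-1) p := by
  funext p
  unfold Gf
  have h := hermiteP_succ k2 (p.2.2 i2)
  have hc : ((hermiteP (k2+1) (p.2.2 i2) : ℝ):ℂ) =
      2*((p.2.2 i2 : ℝ):ℂ)*((hermiteP k2 (p.2.2 i2) : ℝ):ℂ) -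
        2*(k2:ℂ)*((hermiteP (k2-1) (p.2.2 i2) : ℝ):ℂ) := by
    exact_mod_cast congrArg Complex.ofReal h
  rw [hc]
  ring

lemma pdq_zero_fn (j : Fin n) : pdq n j (fun _ => (0:ℂ)) = fun _ => 0 := by
  funext p; unfold pdq; exact deriv_const _ _

/-! ### Ds and Dt on a single basis element -/

def dsP1 : Pms → Pms | (a,m,l,k1,k2) => (a, m-1, l, k1+1, k2)
def dsP2 : Pms → Pms | (a,m,l,k1,k2) => (a, m, l-1, k1, k2+1)
def dsL (P : Pms) : List (ℂ × Pms) := [((P.2.1 : ℂ), dsP1 P), ((P.2.2.1 : ℂ), dsP2 P)]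
def dtL (P : Pms) : List (ℂ × Pms) :=
  [(Complex.I * (P.2.1 : ℂ), dsP1 P), (Complex.I * (P.2.2.1 : ℂ), dsP2 P)]
def tP1 : Pms → Pms | (a,m,l,k1,k2) => (a, m+1, l, k1, k2+1)
def tP2 : Pms → Pms | (a,m,l,k1,k2) => (a, m, l+1, k1+1, k2)
def tL (P : Pms) : List (ℂ × Pms) := [(1, tP1 P), (-1, tP2 P)]

lemma Ds_GP (h01 : i0 ≠ i1) (h02 : i0 ≠ i2) (h12 : i1 ≠ i2) (P : Pms) :
    Ds n (GP i0 i1 i2 P) = clF i0 i1 i2 (dsL P) := by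
  obtain ⟨a, m, l, k1, k2⟩ := P
  have hGP : GP i0 i1 i2 (a,m,l,k1,k2) = Gf i0 i1 i2 a m l k1 k2 := rfl
  funext p
  unfold Ds
  rw [hGP]
  have hterm : ∀ j : Fin n,
      Complex.I * ((p.2.2 j : ℝ):ℂ) * pdy n j (Gf i0 i1 i2 a m l k1 k2) p -
        pdq n j (pdx n j (Gf i0 i1 i2 a m l k1 k2)) p =
      (if j = i1 then (m:ℂ) * Gf i0 i1 i2 a (m-1) l (k1+1) k2 p else 0) +
      (if j = i2 then (l:ℂ) * Gf i0 i1 i2 a m (l-1) k1 (k2+1) p else 0) := by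
    intro j
    by_cases hj1 : j = i1
    · rw [hj1]
      simp only [if_pos rfl, if_neg h12, add_zero]
      simp only [pdy_G_i1 i0 i1 i2 a m l k1 k2 h01 h12,
        pdx_G_i1 i0 i1 i2 a m l k1 k2 h01 h12,
        pdq_cmul i1 ((m:ℕ):ℂ) (Gf i0 i1 i2 a (m-1) l k1 k2),
        pdq_G_i1 i0 i1 i2 a (m-1) l k1 k2 h12,
        Gf_qrec1 i0 i1 i2 a (m-1) l k1 k2, eq_self_iff_true, if_true]
      linear_combination
        (-(((p.2.2 i1 : ℝ):ℂ) * (m:ℂ) * Gf i0 i1 i2 a (m-1) l k1 k2 p)) * Complex.I_mul_I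
    by_cases hj2 : j = i2
    · rw [hj2]
      simp only [if_neg (Ne.symm h12), if_pos rfl, zero_add]
      simp only [pdy_G_i2 i0 i1 i2 a m l k1 k2 h02 h12,
        pdx_G_i2 i0 i1 i2 a m l k1 k2 h02 h12,
        pdq_cmul i2 ((l:ℕ):ℂ) (Gf i0 i1 i2 a m (l-1) k1 k2),
        pdq_G_i2 i0 i1 i2 a m (l-1) k1 k2 h12,
        Gf_qrec2 i0 i1 i2 a m (l-1) k1 k2, eq_self_iff_true, if_true]
      linear_combination
        (-(((p.2.2 i2 : ℝ):ℂ) * (l:ℂ) * Gf i0 i1 i2 a m (l-1) k1 k2 p)) * Complex.I_mul_I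
    by_cases hj0 : j = i0
    · rw [hj0]
      simp only [if_neg h01, if_neg h02, add_zero]
      simp only [pdy_G_i0 i0 i1 i2 a m l k1 k2 h01 h02,
        pdx_G_i0 i0 i1 i2 a m l k1 k2 h01 h02,
        pdq_cmul i0 ((a:ℕ):ℂ) (Gf i0 i1 i2 (a-1) m l k1 k2),
        pdq_G_other i0 i1 i2 (a-1) m l k1 k2 h01 h02]
      linear_combination
        (((p.2.2 i0 : ℝ):ℂ) * (a:ℂ) * Gf i0 i1 i2 (a-1) m l k1 k2 p) * Complex.I_mul_I
    · simp only [if_neg hj1, if_neg hj2, add_zero]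
      simp only [pdy_G_other i0 i1 i2 a m l k1 k2 hj0 hj1 hj2,
        pdx_G_other i0 i1 i2 a m l k1 k2 hj0 hj1 hj2, pdq_zero_fn]
      simp
  rw [Finset.sum_congr rfl (fun j _ => hterm j), Finset.sum_add_distrib,
    Finset.sum_ite_eq' Finset.univ i1 (fun _ => (m:ℂ) * Gf i0 i1 i2 a (m-1) l (k1+1) k2 p),
    Finset.sum_ite_eq' Finset.univ i2 (fun _ => (l:ℂ) * Gf i0 i1 i2 a m (l-1) k1 (k2+1) p)]
  simp only [Finset.mem_univ, if_pos]
  show _ = clF i0 i1 i2 [((m:ℂ), (a, m-1, l, k1+1, k2)), ((l:ℂ), (a, m, l-1, k1, k2+1))] p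
  simp only [clF]
  show _ = (m:ℂ) * Gf i0 i1 i2 a (m-1) l (k1+1) k2 p +
    ((l:ℂ) * Gf i0 i1 i2 a m (l-1) k1 (k2+1) p + 0)
  ring

lemma pdy_sub_qmul (j i : Fin n) (f g : Vec n → ℂ)
    (hf : ∀ (p : Vec n) (t : ℝ),
      DifferentiableAt ℝ (fun s => f (p.1, Function.update p.2.1 j s, p.2.2)) t)
    (hg : ∀ (p : Vec n) (t : ℝ),
      DifferentiableAt ℝ (fun s => g (p.1, Function.update p.2.1 j s, p.2.2)) t) :
    pdy n j (fun p => f p - ((p.2.2 i : ℝ):ℂ) * g p) =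
      fun p => pdy n j f p - ((p.2.2 i : ℝ):ℂ) * pdy n j g p := by
  funext p
  unfold pdy
  dsimp only
  rw [deriv_fun_sub (hf p _) ((hg p _).const_mul _), deriv_const_mul_field]

lemma pdy_neg_qmul (j i : Fin n) (g : Vec n → ℂ) :
    pdy n j (fun p => -((p.2.2 i : ℝ):ℂ) * g p) =
      fun p => -((p.2.2 i : ℝ):ℂ) * pdy n j g p := by
  funext p
  unfold pdy
  dsimp only
  exact deriv_const_mul_field _

lemma Dt_GP (h01 : i0 ≠ i1) (h02 : i0 ≠ i2) (h12 : i1 ≠ i2) (P : Pms) :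
    Dt n (GP i0 i1 i2 P) = clF i0 i1 i2 (dtL P) := by
  obtain ⟨a, m, l, k1, k2⟩ := P
  have hGP : GP i0 i1 i2 (a,m,l,k1,k2) = Gf i0 i1 i2 a m l k1 k2 := rfl
  funext p
  unfold Dt
  rw [hGP]
  have hterm : ∀ j : Fin n,
      Complex.I * ((p.2.2 j : ℝ):ℂ) * pdx n j (Gf i0 i1 i2 a m l k1 k2) p +
        pdy n j (pdq n j (Gf i0 i1 i2 a m l k1 k2)) p =
      (if j = i1 then Complex.I * (m:ℂ) * Gf i0 i1 i2 a (m-1) l (k1+1) k2 p else 0) +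
      (if j = i2 then Complex.I * (l:ℂ) * Gf i0 i1 i2 a m (l-1) k1 (k2+1) p else 0) := by
    intro j
    by_cases hj1 : j = i1
    · rw [hj1]
      simp only [if_pos rfl, if_neg h12, add_zero]
      rw [pdq_G_i1 i0 i1 i2 a m l k1 k2 h12,
        pdy_sub_qmul i1 i1 (fun p => 2*(k1:ℂ) * Gf i0 i1 i2 a m l (k1-1) k2 p)
          (Gf i0 i1 i2 a m l k1 k2)
          (fun p t => (diffy_G i0 i1 i2 a m l (k1-1) k2 h01 h02 h12 i1 p t).const_mul _)
          (fun p t => diffy_G i0 i1 i2 a m l k1 k2 h01 h02 h12 i1 p t)]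
      simp only [pdy_cmul, pdy_G_i1 i0 i1 i2 a m l k1 k2 h01 h12,
        pdy_G_i1 i0 i1 i2 a m l (k1-1) k2 h01 h12,
        pdx_G_i1 i0 i1 i2 a m l k1 k2 h01 h12, Gf_qrec1 i0 i1 i2 a (m-1) l k1 k2,
        eq_self_iff_true, if_true]
      ring
    by_cases hj2 : j = i2
    · rw [hj2]
      simp only [if_neg (Ne.symm h12), if_pos rfl, zero_add]
      rw [pdq_G_i2 i0 i1 i2 a m l k1 k2 h12,
        pdy_sub_qmul i2 i2 (fun p => 2*(k2:ℂ) * Gf i0 i1 i2 a m l k1 (k2-1) p)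
          (Gf i0 i1 i2 a m l k1 k2)
          (fun p t => (diffy_G i0 i1 i2 a m l k1 (k2-1) h01 h02 h12 i2 p t).const_mul _)
          (fun p t => diffy_G i0 i1 i2 a m l k1 k2 h01 h02 h12 i2 p t)]
      simp only [pdy_cmul, pdy_G_i2 i0 i1 i2 a m l k1 k2 h02 h12,
        pdy_G_i2 i0 i1 i2 a m l k1 (k2-1) h02 h12,
        pdx_G_i2 i0 i1 i2 a m l k1 k2 h02 h12, Gf_qrec2 i0 i1 i2 a m (l-1) k1 k2,
        eq_self_iff_true, if_true]
      ring
    by_cases hj0 : j = i0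
    · rw [hj0]
      simp only [if_neg h01, if_neg h02, add_zero]
      rw [pdq_G_other i0 i1 i2 a m l k1 k2 h01 h02,
        pdy_neg_qmul i0 i0 (Gf i0 i1 i2 a m l k1 k2)]
      simp only [pdx_G_i0 i0 i1 i2 a m l k1 k2 h01 h02,
        pdy_G_i0 i0 i1 i2 a m l k1 k2 h01 h02]
      ring
    · rw [pdq_G_other i0 i1 i2 a m l k1 k2 hj1 hj2,
        pdy_neg_qmul j j (Gf i0 i1 i2 a m l k1 k2)]
      simp only [if_neg hj1, if_neg hj2, add_zero,
        pdx_G_other i0 i1 i2 a m l k1 k2 hj0 hj1 hj2,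
        pdy_G_other i0 i1 i2 a m l k1 k2 hj0 hj1 hj2]
      ring
  rw [Finset.sum_congr rfl (fun j _ => hterm j), Finset.sum_add_distrib,
    Finset.sum_ite_eq' Finset.univ i1
      (fun _ => Complex.I * (m:ℂ) * Gf i0 i1 i2 a (m-1) l (k1+1) k2 p),
    Finset.sum_ite_eq' Finset.univ i2
      (fun _ => Complex.I * (l:ℂ) * Gf i0 i1 i2 a m (l-1) k1 (k2+1) p)]
  simp only [Finset.mem_univ, if_pos]
  show _ = clF i0 i1 i2 [(Complex.I * (m:ℂ), (a, m-1, l, k1+1, k2)),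
    (Complex.I * (l:ℂ), (a, m, l-1, k1, k2+1))] p
  simp only [clF]
  show _ = Complex.I * (m:ℂ) * Gf i0 i1 i2 a (m-1) l (k1+1) k2 p +
    (Complex.I * (l:ℂ) * Gf i0 i1 i2 a m (l-1) k1 (k2+1) p + 0)
  ring


/-! ### more zero/linearity helpers -/

lemma pdx_zero_fn (j : Fin n) : pdx n j (fun _ => (0:ℂ)) = fun _ => 0 := by
  funext p; unfold pdx; exact deriv_const _ _

lemma pdy_zero_fn (j : Fin n) : pdy n j (fun _ => (0:ℂ)) = fun _ => 0 := by
  funext p; unfold pdy; exact deriv_const _ _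

lemma pdq_cma (j : Fin n) (c : ℂ) (f g : Vec n → ℂ)
    (hf : ∀ (p : Vec n) (t : ℝ),
      DifferentiableAt ℝ (fun s => f (p.1, p.2.1, Function.update p.2.2 j s)) t)
    (hg : ∀ (p : Vec n) (t : ℝ),
      DifferentiableAt ℝ (fun s => g (p.1, p.2.1, Function.update p.2.2 j s)) t) :
    pdq n j (fun p => c * f p + g p) = fun p => c * pdq n j f p + pdq n j g p := by
  funext p; unfold pdq
  rw [deriv_fun_add ((hf p _).const_mul c) (hg p _), deriv_const_mul_field]

lemma pdy_cma (j : Fin n) (c : ℂ) (f g : Vec n → ℂ)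
    (hf : ∀ (p : Vec n) (t : ℝ),
      DifferentiableAt ℝ (fun s => f (p.1, Function.update p.2.1 j s, p.2.2)) t)
    (hg : ∀ (p : Vec n) (t : ℝ),
      DifferentiableAt ℝ (fun s => g (p.1, Function.update p.2.1 j s, p.2.2)) t) :
    pdy n j (fun p => c * f p + g p) = fun p => c * pdy n j f p + pdy n j g p := by
  funext p; unfold pdy
  rw [deriv_fun_add ((hf p _).const_mul c) (hg p _), deriv_const_mul_field]

lemma diffq_pdx_GP (h01 : i0 ≠ i1) (h02 : i0 ≠ i2) (h12 : i1 ≠ i2) (j : Fin n) (P : Pms)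
    (p : Vec n) (t : ℝ) :
    DifferentiableAt ℝ
      (fun s => pdx n j (GP i0 i1 i2 P) (p.1, p.2.1, Function.update p.2.2 j s)) t := by
  simp only [pdx_GP i0 i1 i2 h01 h02 h12 j P]
  exact (diffq_GP i0 i1 i2 h12 _ j p t).const_mul _

lemma diffq_pdx_clF (h01 : i0 ≠ i1) (h02 : i0 ≠ i2) (h12 : i1 ≠ i2) (j : Fin n)
    (L : List (ℂ × Pms)) (p : Vec n) (t : ℝ) :
    DifferentiableAt ℝ
      (fun s => pdx n j (clF i0 i1 i2 L) (p.1, p.2.1, Function.update p.2.2 j s)) t := by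
  simp only [pdx_clF i0 i1 i2 h01 h02 h12 j L]
  exact diffq_clF i0 i1 i2 h12 _ j p t

lemma diffy_pdq_GP (h01 : i0 ≠ i1) (h02 : i0 ≠ i2) (h12 : i1 ≠ i2) (j : Fin n) (P : Pms)
    (p : Vec n) (t : ℝ) :
    DifferentiableAt ℝ
      (fun s => pdq n j (GP i0 i1 i2 P) (p.1, Function.update p.2.1 j s, p.2.2)) t := by
  simp only [pdq_GP i0 i1 i2 h12 j P]
  exact ((diffy_GP i0 i1 i2 h01 h02 h12 _ j p t).const_mul _).sub
    ((diffy_GP i0 i1 i2 h01 h02 h12 P j p t).const_mul _)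

lemma diffy_pdq_clF (h01 : i0 ≠ i1) (h02 : i0 ≠ i2) (h12 : i1 ≠ i2) (j : Fin n)
    (L : List (ℂ × Pms)) (p : Vec n) (t : ℝ) :
    DifferentiableAt ℝ
      (fun s => pdq n j (clF i0 i1 i2 L) (p.1, Function.update p.2.1 j s, p.2.2)) t := by
  simp only [pdq_clF i0 i1 i2 h12 j L]
  exact (diffy_clF i0 i1 i2 h01 h02 h12 _ j p t).sub
    ((diffy_clF i0 i1 i2 h01 h02 h12 L j p t).const_mul _)

/-! ### cons rules for the operators -/

lemma Ds_cons (h01 : i0 ≠ i1) (h02 : i0 ≠ i2) (h12 : i1 ≠ i2) (cp : ℂ × Pms)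
    (L : List (ℂ × Pms)) :
    Ds n (clF i0 i1 i2 (cp :: L)) =
      fun p => cp.1 * Ds n (GP i0 i1 i2 cp.2) p + Ds n (clF i0 i1 i2 L) p := by
  funext p
  unfold Ds
  rw [Finset.mul_sum, ← Finset.sum_add_distrib]
  refine Finset.sum_congr rfl (fun j _ => ?_)
  rw [congrFun (pdy_cons i0 i1 i2 h01 h02 h12 j cp L) p,
    pdx_cons i0 i1 i2 h01 h02 h12 j cp L,
    pdq_cma j cp.1 (pdx n j (GP i0 i1 i2 cp.2)) (pdx n j (clF i0 i1 i2 L))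
      (diffq_pdx_GP i0 i1 i2 h01 h02 h12 j cp.2) (diffq_pdx_clF i0 i1 i2 h01 h02 h12 j L)]
  ring

lemma Dt_cons (h01 : i0 ≠ i1) (h02 : i0 ≠ i2) (h12 : i1 ≠ i2) (cp : ℂ × Pms)
    (L : List (ℂ × Pms)) :
    Dt n (clF i0 i1 i2 (cp :: L)) =
      fun p => cp.1 * Dt n (GP i0 i1 i2 cp.2) p + Dt n (clF i0 i1 i2 L) p := by
  funext p
  unfold Dt
  rw [Finset.mul_sum, ← Finset.sum_add_distrib]
  refine Finset.sum_congr rfl (fun j _ => ?_)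
  rw [congrFun (pdx_cons i0 i1 i2 h01 h02 h12 j cp L) p,
    pdq_cons i0 i1 i2 h12 j cp L,
    pdy_cma j cp.1 (pdq n j (GP i0 i1 i2 cp.2)) (pdq n j (clF i0 i1 i2 L))
      (diffy_pdq_GP i0 i1 i2 h01 h02 h12 j cp.2) (diffy_pdq_clF i0 i1 i2 h01 h02 h12 j L)]
  ring

lemma Rop_G1 (h12 : i1 ≠ i2) :
    Rop n i1 (Gf i0 i1 i2 a m l k1 k2) = Gf i0 i1 i2 a m l (k1+1) k2 := by
  funext p
  unfold Rop
  rw [congrFun (pdq_G_i1 i0 i1 i2 a m l k1 k2 h12) p, congrFun (Gf_qrec1 i0 i1 i2 a m l k1 k2) p]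
  ring

lemma Rop_G2 (h12 : i1 ≠ i2) :
    Rop n i2 (Gf i0 i1 i2 a m l k1 k2) = Gf i0 i1 i2 a m l k1 (k2+1) := by
  funext p
  unfold Rop
  rw [congrFun (pdq_G_i2 i0 i1 i2 a m l k1 k2 h12) p, congrFun (Gf_qrec2 i0 i1 i2 a m l k1 k2) p]
  ring

lemma Tmap_GP (h12 : i1 ≠ i2) (P : Pms) :
    Tmap n i1 i2 (GP i0 i1 i2 P) = clF i0 i1 i2 (tL P) := by
  obtain ⟨a, m, l, k1, k2⟩ := P
  have hGP : GP i0 i1 i2 (a,m,l,k1,k2) = Gf i0 i1 i2 a m l k1 k2 := rfl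
  funext p
  unfold Tmap
  rw [hGP, Rop_G1 i0 i1 i2 a m l k1 k2 h12, Rop_G2 i0 i1 i2 a m l k1 k2 h12]
  show _ = clF i0 i1 i2 [(1, (a, m+1, l, k1, k2+1)), (-1, (a, m, l+1, k1+1, k2))] p
  simp only [clF]
  show _ = 1 * Gf i0 i1 i2 a (m+1) l k1 (k2+1) p + (-1 * Gf i0 i1 i2 a m (l+1) (k1+1) k2 p + 0)
  unfold Gf
  ring

lemma Tmap_cons (h12 : i1 ≠ i2) (cp : ℂ × Pms) (L : List (ℂ × Pms)) :
    Tmap n i1 i2 (clF i0 i1 i2 (cp :: L)) =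
      fun p => cp.1 * Tmap n i1 i2 (GP i0 i1 i2 cp.2) p + Tmap n i1 i2 (clF i0 i1 i2 L) p := by
  funext p
  unfold Tmap Rop
  rw [pdq_cons i0 i1 i2 h12 i1 cp L, pdq_cons i0 i1 i2 h12 i2 cp L]
  simp only [clF]
  ring

lemma Tmap_zero : Tmap n i1 i2 (fun _ => (0:ℂ)) = fun _ => 0 := by
  funext p
  unfold Tmap Rop
  rw [congrFun (pdq_zero_fn i1) p, congrFun (pdq_zero_fn i2) p]
  ring

/-! ### list algebra -/

def scaleL (c : ℂ) (M : List (ℂ × Pms)) : List (ℂ × Pms) := M.map (fun dq => (c * dq.1, dq.2))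

def lbind (L : List (ℂ × Pms)) (F : Pms → List (ℂ × Pms)) : List (ℂ × Pms) :=
  L.flatMap (fun cp => scaleL cp.1 (F cp.2))

lemma clF_scale (c : ℂ) (M : List (ℂ × Pms)) :
    clF i0 i1 i2 (scaleL c M) = fun p => c * clF i0 i1 i2 M p := by
  induction M with
  | nil => funext p; simp [clF, scaleL]
  | cons dq M ih => funext p; simp only [scaleL, List.map_cons, clF] at *; rw [ih]; ring

lemma lbind_cons (cp : ℂ × Pms) (L : List (ℂ × Pms)) (F : Pms → List (ℂ × Pms)) :
    lbind (cp :: L) F = scaleL cp.1 (F cp.2) ++ lbind L F := by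
  simp [lbind]

lemma lbind_nil (F : Pms → List (ℂ × Pms)) : lbind [] F = [] := rfl

lemma scaleL_append (c : ℂ) (M1 M2 : List (ℂ × Pms)) :
    scaleL c (M1 ++ M2) = scaleL c M1 ++ scaleL c M2 := by
  simp [scaleL]

lemma scaleL_scaleL (c d : ℂ) (M : List (ℂ × Pms)) :
    scaleL c (scaleL d M) = scaleL (c*d) M := by
  induction M with
  | nil => rfl
  | cons dq M ih => simp only [scaleL, List.map_cons] at *; rw [ih]; simp [mul_assoc]

lemma lbind_append (L1 L2 : List (ℂ × Pms)) (F : Pms → List (ℂ × Pms)) :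
    lbind (L1 ++ L2) F = lbind L1 F ++ lbind L2 F := by
  simp [lbind]

lemma lbind_scaleL (c : ℂ) (M : List (ℂ × Pms)) (F : Pms → List (ℂ × Pms)) :
    lbind (scaleL c M) F = scaleL c (lbind M F) := by
  induction M with
  | nil => rfl
  | cons dq M ih =>
    show lbind ((c * dq.1, dq.2) :: scaleL c M) F = _
    rw [lbind_cons, ih, lbind_cons, scaleL_append, scaleL_scaleL]

lemma lbind_assoc (L : List (ℂ × Pms)) (F G : Pms → List (ℂ × Pms)) :
    lbind (lbind L F) G = lbind L (fun P => lbind (F P) G) := by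
  induction L with
  | nil => rfl
  | cons cp L ih =>
    rw [lbind_cons, lbind_append, lbind_scaleL, ih, lbind_cons]

lemma clF_lbind_congr (F F' : Pms → List (ℂ × Pms))
    (h : ∀ P, clF i0 i1 i2 (F P) = clF i0 i1 i2 (F' P)) (L : List (ℂ × Pms)) :
    clF i0 i1 i2 (lbind L F) = clF i0 i1 i2 (lbind L F') := by
  induction L with
  | nil => rfl
  | cons cp L ih =>
    rw [lbind_cons, lbind_cons, clF_append, clF_append, clF_scale, clF_scale, h cp.2, ih]

/-! ### operators on clF lists -/

lemma Ds_clF (h01 : i0 ≠ i1) (h02 : i0 ≠ i2) (h12 : i1 ≠ i2) (L : List (ℂ × Pms)) :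
    Ds n (clF i0 i1 i2 L) = clF i0 i1 i2 (lbind L dsL) := by
  induction L with
  | nil =>
    funext p
    unfold Ds
    simp only [clF, lbind_nil]
    simp [pdx_zero_fn, pdy_zero_fn, pdq_zero_fn]
  | cons cp L ih =>
    rw [Ds_cons i0 i1 i2 h01 h02 h12 cp L, Ds_GP i0 i1 i2 h01 h02 h12 cp.2, ih, lbind_cons]
    funext p
    rw [clF_append, clF_scale]

lemma Dt_clF (h01 : i0 ≠ i1) (h02 : i0 ≠ i2) (h12 : i1 ≠ i2) (L : List (ℂ × Pms)) :
    Dt n (clF i0 i1 i2 L) = clF i0 i1 i2 (lbind L dtL) := by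
  induction L with
  | nil =>
    funext p
    unfold Dt
    simp only [clF, lbind_nil]
    simp [pdx_zero_fn, pdy_zero_fn, pdq_zero_fn]
  | cons cp L ih =>
    rw [Dt_cons i0 i1 i2 h01 h02 h12 cp L, Dt_GP i0 i1 i2 h01 h02 h12 cp.2, ih, lbind_cons]
    funext p
    rw [clF_append, clF_scale]

lemma Tmap_clF (h12 : i1 ≠ i2) (L : List (ℂ × Pms)) :
    Tmap n i1 i2 (clF i0 i1 i2 L) = clF i0 i1 i2 (lbind L tL) := by
  induction L with
  | nil =>
    funext p
    simp only [clF, lbind_nil]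
    exact congrFun (Tmap_zero i1 i2) p
  | cons cp L ih =>
    rw [Tmap_cons i0 i1 i2 h12 cp L, Tmap_GP i0 i1 i2 h12 cp.2, ih, lbind_cons]
    funext p
    rw [clF_append, clF_scale]


/-! ### commutation of Ds/Dt with Tmap on basis elements -/

lemma comm_ds (P : Pms) :
    clF i0 i1 i2 (lbind (tL P) dsL) = clF i0 i1 i2 (lbind (dsL P) tL) := by
  obtain ⟨a, m, l, k1, k2⟩ := P
  funext p
  rcases m with _ | m <;> rcases l with _ | l <;>
    simp [lbind, tL, dsL, tP1, tP2, dsP1, dsP2, scaleL, clF, GP, Nat.add_sub_cancel] <;>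
    push_cast <;> ring

lemma comm_dt (P : Pms) :
    clF i0 i1 i2 (lbind (tL P) dtL) = clF i0 i1 i2 (lbind (dtL P) tL) := by
  obtain ⟨a, m, l, k1, k2⟩ := P
  funext p
  rcases m with _ | m <;> rcases l with _ | l <;>
    simp [lbind, tL, dtL, tP1, tP2, dsP1, dsP2, scaleL, clF, GP, Nat.add_sub_cancel] <;>
    push_cast <;> ring

/-! ### multiplication by z^e -/

def bumpP (e : ℕ) : Pms → Pms | (a,m,l,k1,k2) => (a+e, m, l, k1, k2)
def bumpL (e : ℕ) (L : List (ℂ × Pms)) : List (ℂ × Pms) :=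
  L.map (fun cp => (cp.1, bumpP e cp.2))

lemma zmul_GP (e : ℕ) (P : Pms) (p : Vec n) :
    ((p.1 i0 : ℂ) + Complex.I * (p.2.1 i0 : ℂ))^e * GP i0 i1 i2 P p =
      GP i0 i1 i2 (bumpP e P) p := by
  obtain ⟨a, m, l, k1, k2⟩ := P
  have h1 : GP i0 i1 i2 (a,m,l,k1,k2) = Gf i0 i1 i2 a m l k1 k2 := rfl
  have h2 : GP i0 i1 i2 (bumpP e (a,m,l,k1,k2)) = Gf i0 i1 i2 (a+e) m l k1 k2 := rfl
  rw [h1, h2]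
  unfold Gf
  rw [pow_add]
  ring

lemma zmul_clF (e : ℕ) (L : List (ℂ × Pms)) :
    (fun p => ((p.1 i0 : ℂ) + Complex.I * (p.2.1 i0 : ℂ))^e * clF i0 i1 i2 L p) =
      clF i0 i1 i2 (bumpL e L) := by
  induction L with
  | nil => funext p; simp [clF, bumpL]
  | cons cp L ih =>
    funext p
    show _ = clF i0 i1 i2 ((cp.1, bumpP e cp.2) :: bumpL e L) p
    simp only [clF]
    rw [← congrFun ih p, ← zmul_GP i0 i1 i2 e cp.2 p]
    ring

lemma dsL_bump (e : ℕ) (P : Pms) :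
    dsL (bumpP e P) = (dsL P).map (fun cp => (cp.1, bumpP e cp.2)) := by
  obtain ⟨a, m, l, k1, k2⟩ := P; rfl

lemma dtL_bump (e : ℕ) (P : Pms) :
    dtL (bumpP e P) = (dtL P).map (fun cp => (cp.1, bumpP e cp.2)) := by
  obtain ⟨a, m, l, k1, k2⟩ := P; rfl

lemma scaleL_bumpL (c : ℂ) (e : ℕ) (M : List (ℂ × Pms)) :
    scaleL c (bumpL e M) = bumpL e (scaleL c M) := by
  induction M with
  | nil => rfl
  | cons dq M ih => simp only [scaleL, bumpL, List.map_cons] at *; rw [ih]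

lemma bumpL_append (e : ℕ) (M1 M2 : List (ℂ × Pms)) :
    bumpL e (M1 ++ M2) = bumpL e M1 ++ bumpL e M2 := by
  simp [bumpL]

lemma lbind_bump (e : ℕ) (L : List (ℂ × Pms)) (F : Pms → List (ℂ × Pms))
    (hF : ∀ P, F (bumpP e P) = (F P).map (fun cp => (cp.1, bumpP e cp.2))) :
    lbind (bumpL e L) F = bumpL e (lbind L F) := by
  induction L with
  | nil => rfl
  | cons cp L ih =>
    show lbind ((cp.1, bumpP e cp.2) :: bumpL e L) F = _
    rw [lbind_cons, ih, lbind_cons, bumpL_append, hF cp.2]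
    congr 1
    exact scaleL_bumpL cp.1 e (F cp.2)

/-! ### the main induction -/

lemma main_ind (h01 : i0 ≠ i1) (h02 : i0 ≠ i2) (h12 : i1 ≠ i2) (c : ℕ) (b : ℕ) :
    ∃ L : List (ℂ × Pms),
      (Tmap n i1 i2)^[b] (clF i0 i1 i2 [(1,(0,0,0,0,c))]) = clF i0 i1 i2 L ∧
      Ds n (clF i0 i1 i2 L) = (fun _ => 0) ∧ Dt n (clF i0 i1 i2 L) = (fun _ => 0) := by
  induction b with
  | zero =>
    refine ⟨[(1,(0,0,0,0,c))], rfl, ?_, ?_⟩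
    · rw [Ds_clF i0 i1 i2 h01 h02 h12]
      funext p
      simp [lbind, dsL, dsP1, dsP2, scaleL, clF]
    · rw [Dt_clF i0 i1 i2 h01 h02 h12]
      funext p
      simp [lbind, dtL, dsP1, dsP2, scaleL, clF]
  | succ b ih =>
    obtain ⟨L, hL, hDs, hDt⟩ := ih
    refine ⟨lbind L tL, ?_, ?_, ?_⟩
    · rw [Function.iterate_succ_apply', hL, Tmap_clF i0 i1 i2 h12 L]
    · rw [Ds_clF i0 i1 i2 h01 h02 h12, lbind_assoc,
        clF_lbind_congr i0 i1 i2 _ _ (fun P => comm_ds i0 i1 i2 P) L, ← lbind_assoc,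
        ← Tmap_clF i0 i1 i2 h12, ← Ds_clF i0 i1 i2 h01 h02 h12, hDs]
      exact Tmap_zero i1 i2
    · rw [Dt_clF i0 i1 i2 h01 h02 h12, lbind_assoc,
        clF_lbind_congr i0 i1 i2 _ _ (fun P => comm_dt i0 i1 i2 P) L, ← lbind_assoc,
        ← Tmap_clF i0 i1 i2 h12, ← Dt_clF i0 i1 i2 h01 h02 h12, hDt]
      exact Tmap_zero i1 i2

end HWaux

theorem highest_weight_vector_is_symplectic_h_monogenic
    (n a b r : ℕ) (hn : 3 ≤ n) (hbr : b ≤ r) :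
    Ds n (fun p : Vec n =>
        ((p.1 ⟨0, by omega⟩ : ℂ) + Complex.I * (p.2.1 ⟨0, by omega⟩ : ℂ)) ^ a *
          (Tmap n ⟨n - 2, by omega⟩ ⟨n - 1, by omega⟩)^[b]
            (fun p' : Vec n => (hermiteP (r - b) (p'.2.2 ⟨n - 1, by omega⟩) : ℂ) *
              Complex.exp (-(1 / 2 : ℂ) * ((∑ j : Fin n, (p'.2.2 j) ^ 2 : ℝ) : ℂ))) p)
      = (fun _ => 0) ∧
    Dt n (fun p : Vec n =>
        ((p.1 ⟨0, by omega⟩ : ℂ) + Complex.I * (p.2.1 ⟨0, by omega⟩ : ℂ)) ^ a *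
          (Tmap n ⟨n - 2, by omega⟩ ⟨n - 1, by omega⟩)^[b]
            (fun p' : Vec n => (hermiteP (r - b) (p'.2.2 ⟨n - 1, by omega⟩) : ℂ) *
              Complex.exp (-(1 / 2 : ℂ) * ((∑ j : Fin n, (p'.2.2 j) ^ 2 : ℝ) : ℂ))) p)
      = (fun _ => 0) := by
  have h01 : (⟨0, by omega⟩ : Fin n) ≠ (⟨n - 2, by omega⟩ : Fin n) := by
    simp only [ne_eq, Fin.mk.injEq]; omega
  have h02 : (⟨0, by omega⟩ : Fin n) ≠ (⟨n - 1, by omega⟩ : Fin n) := by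
    simp only [ne_eq, Fin.mk.injEq]; omega
  have h12 : (⟨n - 2, by omega⟩ : Fin n) ≠ (⟨n - 1, by omega⟩ : Fin n) := by
    simp only [ne_eq, Fin.mk.injEq]; omega
  have hinner : (fun p' : Vec n => (hermiteP (r - b) (p'.2.2 ⟨n - 1, by omega⟩) : ℂ) *
      Complex.exp (-(1 / 2 : ℂ) * ((∑ j : Fin n, (p'.2.2 j) ^ 2 : ℝ) : ℂ)))
      = HWaux.clF ⟨0, by omega⟩ ⟨n - 2, by omega⟩ ⟨n - 1, by omega⟩ [(1, (0,0,0,0,r - b))] := by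
    funext p
    show _ = 1 * HWaux.Gf (⟨0, by omega⟩ : Fin n) ⟨n - 2, by omega⟩ ⟨n - 1, by omega⟩
      0 0 0 0 (r - b) p + 0
    unfold HWaux.Gf HWaux.Efn
    rw [HWaux.hermiteP_zero]
    push_cast
    ring
  obtain ⟨L, hL, hDs, hDt⟩ := HWaux.main_ind (⟨0, by omega⟩ : Fin n) ⟨n - 2, by omega⟩
    ⟨n - 1, by omega⟩ h01 h02 h12 (r - b) b
  rw [hinner, hL]
  constructor
  · rw [HWaux.zmul_clF (⟨0, by omega⟩ : Fin n) ⟨n - 2, by omega⟩ ⟨n - 1, by omega⟩ a L,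
      HWaux.Ds_clF _ _ _ h01 h02 h12,
      HWaux.lbind_bump a L HWaux.dsL (fun P => HWaux.dsL_bump a P),
      ← HWaux.zmul_clF,
      show HWaux.clF (⟨0, by omega⟩ : Fin n) ⟨n - 2, by omega⟩ ⟨n - 1, by omega⟩
          (HWaux.lbind L HWaux.dsL) = (fun _ => 0) from
        (HWaux.Ds_clF _ _ _ h01 h02 h12 L).symm.trans hDs]
    funext p
    simp
  · rw [HWaux.zmul_clF (⟨0, by omega⟩ : Fin n) ⟨n - 2, by omega⟩ ⟨n - 1, by omega⟩ a L,
      HWaux.Dt_clF _ _ _ h01 h02 h12,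
      HWaux.lbind_bump a L HWaux.dtL (fun P => HWaux.dtL_bump a P),
      ← HWaux.zmul_clF,
      show HWaux.clF (⟨0, by omega⟩ : Fin n) ⟨n - 2, by omega⟩ ⟨n - 1, by omega⟩
          (HWaux.lbind L HWaux.dtL) = (fun _ => 0) from
        (HWaux.Dt_clF _ _ _ h01 h02 h12 L).symm.trans hDt]
    funext p
    simp
end
end
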